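/- arXiv:0903.1352 — 6 statements merged into one kernel-verified Lean document; each statement's English description precedes it below -/
import Mathlib

section
/- For threads P_1,…,P_n arising as the solution of a finite linear recursive specification with n equations, if π(n−1, P_i) = π(n−1, P_j) then π(k, P_i) = π(k, P_j) for all k ∈ ℕ, hence P_i = P_j. In particular, equality of regular threads given by finite linear recursive specifications is decidable. -/
/-- Basic Thread Algebra: freely generated by `S`, `D` and postconditional
composition `pcc P a Q` (i.e. `P ⊴ a ⊵ Q`). -/
inductive BTA (A : Type) : Type
  | S : BTA A
  | D : BTA A
  | pcc : BTA A → A → BTA A → BTA A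

namespace BTA

variable {A : Type}

/-- The approximation operator `π`. -/
def pi : ℕ → BTA A → BTA A
  | 0, _ => D
  | _+1, S => S
  | _+1, D => D
  | n+1, pcc P a Q => pcc (pi n P) a (pi n Q)

end BTA
theorem BTA.pi_pi {A : Type} : ∀ (n : ℕ) (P : BTA A),
    BTA.pi n (BTA.pi (n+1) P) = BTA.pi n P := by
  intro n
  induction n with
  | zero => intro P; rfl
  | succ n ih => intro P; cases P <;> simp [BTA.pi, ih]

/-- `BTA^∞`: the completion of BTA, given by projective sequences. -/
def BTAinf (A : Type) : Type := {f : ℕ → BTA A // ∀ n, BTA.pi n (f (n+1)) = f n}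

/-- The thread `S` in `BTA^∞`. -/
def Sinf (A : Type) : BTAinf A :=
  ⟨fun n => match n with | 0 => BTA.D | _+1 => BTA.S, by intro n; cases n <;> rfl⟩

/-- The thread `D` in `BTA^∞`. -/
def Dinf (A : Type) : BTAinf A := ⟨fun _ => BTA.D, by intro n; cases n <;> rfl⟩

/-- Postconditional composition `x ⊴ a ⊵ y` on `BTA^∞`. -/
def pccInf {A : Type} (a : A) (x y : BTAinf A) : BTAinf A :=
  ⟨fun n => match n with
    | 0 => BTA.D
    | n+1 => BTA.pcc (x.1 n) a (y.1 n),
   by intro n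
      cases n with
      | zero => rfl
      | succ n =>
          show BTA.pi (n+1) (BTA.pcc (x.1 (n+1)) a (y.1 (n+1))) = _
          simp [BTA.pi, x.2 n, y.2 n]⟩

/-- The right-hand sides of a finite linear recursive specification with
index set `Fin n`: each is `S`, `D`, or `x_j ⊴ a ⊵ x_k`. -/
inductive LinTerm (A : Type) (n : ℕ) : Type
  | S : LinTerm A n
  | D : LinTerm A n
  | pcc (j : Fin n) (a : A) (k : Fin n) : LinTerm A n

/-- `P` is a solution of the finite linear recursive specification `t`. -/
def IsSolution {A : Type} {n : ℕ} (t : Fin n → LinTerm A n)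
    (P : Fin n → BTAinf A) : Prop :=
  ∀ i : Fin n,
    match t i with
    | LinTerm.S => P i = Sinf A
    | LinTerm.D => P i = Dinf A
    | LinTerm.pcc j a k => P i = pccInf a (P j) (P k)


namespace BTAAux

variable {A : Type} {n : ℕ}

noncomputable instance : DecidableEq (BTA A) := Classical.decEq _

lemma down (P Q : BTAinf A) (m : ℕ) (h : P.1 (m+1) = Q.1 (m+1)) : P.1 m = Q.1 m := by
  rw [← P.2 m, ← Q.2 m, h]

lemma down_le (P Q : BTAinf A) : ∀ b a, a ≤ b → P.1 b = Q.1 b → P.1 a = Q.1 a := by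
  intro b
  induction b with
  | zero =>
      intro a ha h
      rw [Nat.le_zero.mp ha]; exact h
  | succ b ih =>
      intro a ha h
      rcases Nat.eq_or_lt_of_le ha with rfl | hlt
      · exact h
      · exact ih a (Nat.lt_succ_iff.mp hlt) (down P Q b h)

lemma val_succ (t : Fin n → LinTerm A n) (P : Fin n → BTAinf A) (hP : IsSolution t P)
    (i : Fin n) (m : ℕ) :
    (P i).1 (m+1) = (match t i with
      | LinTerm.S => BTA.S
      | LinTerm.D => BTA.D
      | LinTerm.pcc j a k => BTA.pcc ((P j).1 m) a ((P k).1 m)) := by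
  have hi := hP i
  cases ht : t i <;> rw [ht] at hi <;> simp only [] at hi <;> rw [hi] <;> rfl

def Stab (P : Fin n → BTAinf A) (m : ℕ) : Prop :=
  ∀ i j : Fin n, (P i).1 m = (P j).1 m → (P i).1 (m+1) = (P j).1 (m+1)

lemma stab_succ (t : Fin n → LinTerm A n) (P : Fin n → BTAinf A) (hP : IsSolution t P)
    (m : ℕ) (hs : Stab P m) : Stab P (m+1) := by
  intro i j h
  rw [val_succ t P hP i m, val_succ t P hP j m] at h
  rw [val_succ t P hP i (m+1), val_succ t P hP j (m+1)]
  cases hti : t i <;> cases htj : t j <;> rw [hti, htj] at h <;> simp only [] at h ⊢ <;>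
    first
      | rfl
      | (simp at h; done)
      | (injection h with h1 h2 h3
         rw [hs _ _ h1, h2, hs _ _ h3])

lemma stab_ge (t : Fin n → LinTerm A n) (P : Fin n → BTAinf A) (hP : IsSolution t P)
    (m : ℕ) (hs : Stab P m) : ∀ l, m ≤ l → Stab P l := by
  intro l hl
  induction l with
  | zero => exact (Nat.le_zero.mp hl) ▸ hs
  | succ l ih =>
      rcases Nat.eq_or_lt_of_le hl with rfl | hlt
      · exact hs
      · exact stab_succ t P hP l (ih (Nat.lt_succ_iff.mp hlt))

lemma exists_stab (hn : 1 ≤ n) (t : Fin n → LinTerm A n) (P : Fin n → BTAinf A)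
    (hP : IsSolution t P) : ∃ m, m < n ∧ Stab P m := by
  by_contra hcon
  push_neg at hcon
  set g : ℕ → Finset (BTA A) := fun m => Finset.univ.image (fun i : Fin n => (P i).1 m) with hg
  have himg : ∀ m, g m = (g (m+1)).image (BTA.pi m) := by
    intro m
    rw [hg]
    simp only [Finset.image_image]
    congr 1
    funext i
    exact ((P i).2 m).symm
  have hle : ∀ m, (g m).card ≤ (g (m+1)).card := by
    intro m; rw [himg m]; exact Finset.card_image_le
  have hlt : ∀ m, m < n → (g m).card < (g (m+1)).card := by
    intro m hm
    rcases Nat.lt_or_ge (g m).card (g (m+1)).card with h | h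
    · exact h
    · exfalso
      have hcard : ((g (m+1)).image (BTA.pi m)).card = (g (m+1)).card := by
        refine le_antisymm Finset.card_image_le ?_
        rw [← himg m]; exact h
      have hinj := Finset.injOn_of_card_image_eq hcard
      refine hcon m hm ?_
      intro i j hij
      have hi : (P i).1 (m+1) ∈ g (m+1) := by
        rw [hg]; exact Finset.mem_image_of_mem _ (Finset.mem_univ i)
      have hj : (P j).1 (m+1) ∈ g (m+1) := by
        rw [hg]; exact Finset.mem_image_of_mem _ (Finset.mem_univ j)
      apply hinj hi hj
      rw [(P i).2 m, (P j).2 m]; exact hij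
  have hcn : ∀ m, m ≤ n → m + 1 ≤ (g m).card := by
    intro m
    induction m with
    | zero =>
        intro _
        have hmem : (P ⟨0, hn⟩).1 0 ∈ g 0 := by
          rw [hg]; exact Finset.mem_image_of_mem _ (Finset.mem_univ _)
        exact Finset.card_pos.mpr ⟨_, hmem⟩
    | succ m ih =>
        intro hm
        exact Nat.succ_le_of_lt (lt_of_le_of_lt (ih (le_of_lt hm)) (hlt m hm))
  have h1 := hcn n le_rfl
  have h2 : (g n).card ≤ n := by
    rw [hg]
    calc (Finset.univ.image (fun i : Fin n => (P i).1 n)).card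
        ≤ (Finset.univ : Finset (Fin n)).card := Finset.card_image_le
      _ = n := by simp
  omega

end BTAAux

/-- For the solution `P_1,…,P_n` of a finite linear recursive specification
with `n` equations: if `π(n-1, P_i) = π(n-1, P_j)` then `π(k, P_i) = π(k, P_j)`
for all `k`, hence `P_i = P_j` (equality in `BTA^∞` being componentwise). -/
theorem eq_of_approx_eq {A : Type} {n : ℕ} (hn : 1 ≤ n)
    (t : Fin n → LinTerm A n) (P : Fin n → BTAinf A)
    (hP : IsSolution t P) (i j : Fin n)
    (h : (P i).1 (n-1) = (P j).1 (n-1)) :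
    (∀ k : ℕ, (P i).1 k = (P j).1 k) ∧ P i = P j := by
  obtain ⟨m, hm, hs⟩ := BTAAux.exists_stab hn t P hP
  have hstab : ∀ l, n - 1 ≤ l → BTAAux.Stab P l := by
    intro l hl
    exact BTAAux.stab_ge t P hP m hs l (by omega)
  have hup : ∀ d, (P i).1 (n - 1 + d) = (P j).1 (n - 1 + d) := by
    intro d
    induction d with
    | zero => exact h
    | succ d ih =>
        have := hstab (n - 1 + d) (Nat.le_add_right _ _) i j ih
        exact this
  have hall : ∀ k : ℕ, (P i).1 k = (P j).1 k := by
    intro k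
    rcases Nat.le_total k (n - 1) with hk | hk
    · exact BTAAux.down_le (P i) (P j) (n - 1) k hk h
    · obtain ⟨d, rfl⟩ := Nat.exists_eq_add_of_le hk
      exact hup d
  exact ⟨hall, Subtype.ext (funext hall)⟩
end

section
/- A thread P in BTA^∞ is regular (i.e., has finitely many residual threads) if and only if P is a component of the solution of some finite linear recursive specification. -/
/-- The residual threads of `P`: the least set containing `P` and closed
under taking the two branches of a postconditional composition. -/
inductive IsRes {A : Type} (P : BTAinf A) : BTAinf A → Prop
  | refl : IsRes P P
  | left (a : A) (Q R : BTAinf A) : IsRes P (pccInf a Q R) → IsRes P Q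
  | right (a : A) (Q R : BTAinf A) : IsRes P (pccInf a Q R) → IsRes P R

/-- A thread is regular iff it has finitely many residual threads. -/
def Regular {A : Type} (P : BTAinf A) : Prop := {Q : BTAinf A | IsRes P Q}.Finite


section Aux

variable {A : Type}

lemma myPi_eq_S {n : ℕ} {y : BTA A} (h : BTA.pi (n+1) y = BTA.S) : y = BTA.S := by
  cases y <;> simp [BTA.pi] at h ⊢

lemma myPi_eq_D {n : ℕ} {y : BTA A} (h : BTA.pi (n+1) y = BTA.D) : y = BTA.D := by
  cases y <;> simp [BTA.pi] at h ⊢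

lemma myPi_eq_pcc {n : ℕ} {y u v : BTA A} {a : A}
    (h : BTA.pi (n+1) y = BTA.pcc u a v) : ∃ u' v', y = BTA.pcc u' a v' := by
  cases y with
  | S => simp [BTA.pi] at h
  | D => simp [BTA.pi] at h
  | pcc p b q =>
      simp [BTA.pi] at h
      exact ⟨p, q, by rw [h.2.1]⟩

/-- left branch extractor -/
def myLft : BTA A → BTA A
  | BTA.pcc u _ _ => u
  | _ => BTA.D

def myRgt : BTA A → BTA A
  | BTA.pcc _ _ v => v
  | _ => BTA.D

lemma myVal0 (x : BTAinf A) : x.1 0 = BTA.D := (x.2 0).symm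

lemma mySinf_val_succ (n : ℕ) : (Sinf A).1 (n+1) = BTA.S := rfl

lemma myDinf_val (n : ℕ) : (Dinf A).1 n = BTA.D := rfl

lemma myPccInf_val_succ (a : A) (Q R : BTAinf A) (n : ℕ) :
    (pccInf a Q R).1 (n+1) = BTA.pcc (Q.1 n) a (R.1 n) := rfl

lemma myTrichotomy (x : BTAinf A) :
    x = Sinf A ∨ x = Dinf A ∨ ∃ a Q R, x = pccInf a Q R := by
  rcases h1 : x.1 1 with _ | _ | ⟨u, a, v⟩
  · left
    have hall : ∀ n, x.1 (n+1) = BTA.S := by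
      intro n; induction n with
      | zero => exact h1
      | succ m ih => exact myPi_eq_S ((x.2 (m+1)).trans ih)
    apply Subtype.ext; funext n
    cases n with
    | zero => exact (myVal0 x).trans rfl
    | succ m => exact (hall m).trans rfl
  · right; left
    have hall : ∀ n, x.1 (n+1) = BTA.D := by
      intro n; induction n with
      | zero => exact h1
      | succ m ih => exact myPi_eq_D ((x.2 (m+1)).trans ih)
    apply Subtype.ext; funext n
    cases n with
    | zero => exact (myVal0 x).trans rfl
    | succ m => exact (hall m).trans rfl
  · right; right
    have hall : ∀ n, ∃ u' v', x.1 (n+1) = BTA.pcc u' a v' := by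
      intro n; induction n with
      | zero => exact ⟨u, v, h1⟩
      | succ m ih =>
          obtain ⟨u', v', hm⟩ := ih
          exact myPi_eq_pcc ((x.2 (m+1)).trans hm)
    have hproj : ∀ n, x.1 (n+1) = BTA.pi (n+1) (x.1 (n+2)) := fun n => (x.2 (n+1)).symm
    refine ⟨a, ⟨fun n => myLft (x.1 (n+1)), ?_⟩, ⟨fun n => myRgt (x.1 (n+1)), ?_⟩, ?_⟩
    · intro n
      obtain ⟨u', v', h2⟩ := hall (n+1)
      have h3 : x.1 (n+1) = BTA.pcc (BTA.pi n u') a (BTA.pi n v') := by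
        rw [hproj n, h2]; rfl
      show BTA.pi n (myLft (x.1 (n+2))) = myLft (x.1 (n+1))
      rw [h2, h3]; rfl
    · intro n
      obtain ⟨u', v', h2⟩ := hall (n+1)
      have h3 : x.1 (n+1) = BTA.pcc (BTA.pi n u') a (BTA.pi n v') := by
        rw [hproj n, h2]; rfl
      show BTA.pi n (myRgt (x.1 (n+2))) = myRgt (x.1 (n+1))
      rw [h2, h3]; rfl
    · apply Subtype.ext; funext n
      cases n with
      | zero => exact (myVal0 x).trans rfl
      | succ m =>
          obtain ⟨u', v', h2⟩ := hall m
          show x.1 (m+1) = BTA.pcc (myLft (x.1 (m+1))) a (myRgt (x.1 (m+1)))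
          rw [h2]; rfl

lemma myPccInf_inj {a a' : A} {Q R Q' R' : BTAinf A}
    (h : pccInf a Q R = pccInf a' Q' R') : a = a' ∧ Q = Q' ∧ R = R' := by
  have h1 : ∀ n, BTA.pcc (Q.1 n) a (R.1 n) = BTA.pcc (Q'.1 n) a' (R'.1 n) := by
    intro n
    have := congrArg (fun x : BTAinf A => x.1 (n+1)) h
    simpa [myPccInf_val_succ] using this
  exact ⟨(BTA.pcc.inj (h1 0)).2.1,
    Subtype.ext (funext fun n => (BTA.pcc.inj (h1 n)).1),
    Subtype.ext (funext fun n => (BTA.pcc.inj (h1 n)).2.2)⟩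

lemma mySinf_ne_pcc (a : A) (Q R : BTAinf A) : Sinf A ≠ pccInf a Q R := by
  intro h
  have := congrArg (fun x : BTAinf A => x.1 1) h
  simp only [mySinf_val_succ 0, myPccInf_val_succ] at this
  cases this

lemma myDinf_ne_pcc (a : A) (Q R : BTAinf A) : Dinf A ≠ pccInf a Q R := by
  intro h
  have := congrArg (fun x : BTAinf A => x.1 1) h
  simp only [myDinf_val, myPccInf_val_succ] at this
  cases this

end Aux

/-- A thread `P ∈ BTA^∞` is regular iff it is a component of the solution of
some finite linear recursive specification. -/
theorem regular_iff_solution {A : Type} (P : BTAinf A) :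
    Regular P ↔
      ∃ (n : ℕ) (t : Fin n → LinTerm A n) (Q : Fin n → BTAinf A) (i : Fin n),
        IsSolution t Q ∧ P = Q i := by
  constructor
  · intro hreg
    haveI : Fintype {Q : BTAinf A | IsRes P Q} := hreg.fintype
    set n := Fintype.card {Q : BTAinf A | IsRes P Q} with hn
    let e : Fin n ≃ {Q : BTAinf A | IsRes P Q} := (Fintype.equivFin _).symm
    let Q : Fin n → BTAinf A := fun i => (e i).1
    have hQres : ∀ i, IsRes P (Q i) := fun i => (e i).2
    have hQ : ∀ (x : BTAinf A) (hx : IsRes P x), Q (e.symm ⟨x, hx⟩) = x := by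
      intro x hx; exact congrArg Subtype.val (e.apply_symm_apply ⟨x, hx⟩)
    have hex : ∀ i : Fin n, ∃ τ : LinTerm A n,
        match τ with
        | LinTerm.S => Q i = Sinf A
        | LinTerm.D => Q i = Dinf A
        | LinTerm.pcc j a k => Q i = pccInf a (Q j) (Q k) := by
      intro i
      rcases myTrichotomy (Q i) with h | h | ⟨a, y, z, h⟩
      · exact ⟨LinTerm.S, h⟩
      · exact ⟨LinTerm.D, h⟩
      · have hres : IsRes P (pccInf a y z) := h ▸ hQres i
        have hy : IsRes P y := IsRes.left a y z hres
        have hz : IsRes P z := IsRes.right a y z hres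
        refine ⟨LinTerm.pcc (e.symm ⟨y, hy⟩) a (e.symm ⟨z, hz⟩), ?_⟩
        show Q i = pccInf a (Q (e.symm ⟨y, hy⟩)) (Q (e.symm ⟨z, hz⟩))
        rw [hQ y hy, hQ z hz]; exact h
    choose t ht using hex
    refine ⟨n, t, Q, e.symm ⟨P, IsRes.refl⟩, ht, ?_⟩
    exact (hQ P IsRes.refl).symm
  · rintro ⟨n, t, Q, i, hsol, rfl⟩
    apply Set.Finite.subset (Set.finite_range Q)
    intro R hR
    have key : ∀ R, IsRes (Q i) R → ∃ j, Q j = R := by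
      intro R hR
      induction hR with
      | refl => exact ⟨i, rfl⟩
      | left a U V h ih =>
          obtain ⟨j, hj⟩ := ih
          have hs := hsol j
          rcases htj : t j with _ | _ | ⟨j', a', k'⟩ <;> simp only [htj] at hs
          · exact absurd (hs ▸ hj) (mySinf_ne_pcc a U V)
          · exact absurd (hs ▸ hj) (myDinf_ne_pcc a U V)
          · have : pccInf a U V = pccInf a' (Q j') (Q k') := hj ▸ hs
            exact ⟨j', (myPccInf_inj this).2.1.symm⟩
      | right a U V h ih =>
          obtain ⟨j, hj⟩ := ih
          have hs := hsol j
          rcases htj : t j with _ | _ | ⟨j', a', k'⟩ <;> simp only [htj] at hs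
          · exact absurd (hs ▸ hj) (mySinf_ne_pcc a U V)
          · exact absurd (hs ▸ hj) (myDinf_ne_pcc a U V)
          · have : pccInf a U V = pccInf a' (Q j') (Q k') := hj ▸ hs
            exact ⟨k', (myPccInf_inj this).2.2.symm⟩
    exact key R hR
end

section
/- Every regular thread is produced by a C-program, i.e., for every solution P_1 of a finite linear recursive specification there is a C-program X with left-to-right thread extraction ⌊X⌋_1 = P_1; moreover X can be chosen using only instructions from {+/a, /#k, #k\, !, #}. -/
/-- The instructions of the semigroup `C`: forward and backward basic,
positive test, negative test and jump instructions, termination `!`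
and abort `#`. -/
inductive Instr (A : Type) : Type
  | fbasic (a : A)      -- /a
  | fptest (a : A)      -- +/a
  | fntest (a : A)      -- -/a
  | fjump (k : ℕ+)      -- /#k
  | bbasic (a : A)      -- a\
  | bptest (a : A)      -- +a\
  | bntest (a : A)      -- -a\
  | bjump (k : ℕ+)      -- #k\
  | halt                -- !
  | abort               -- #

/-- The instruction at (1-based) position `j` of the `C`-expression `X`. -/
def instAt {A : Type} (X : List (Instr A)) (j : ℤ) : Option (Instr A) :=
  if 1 ≤ j ∧ j ≤ (X.length : ℤ) then X[(j-1).toNat]? else none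

/-- `T` satisfies the thread-extraction equations for the `C`-expression `X`
(Table 1 of the paper, together with `⌊X⌋_j = D` for out-of-range `j`). -/
def ExtrEqns {A : Type} (X : List (Instr A)) (T : ℤ → BTAinf A) : Prop :=
  ∀ j : ℤ,
    match instAt X j with
    | none => T j = Dinf A
    | some (Instr.fbasic a) => T j = pccInf a (T (j+1)) (T (j+1))
    | some (Instr.fptest a) => T j = pccInf a (T (j+1)) (T (j+2))
    | some (Instr.fntest a) => T j = pccInf a (T (j+2)) (T (j+1))
    | some (Instr.fjump k) => T j = T (j + ((k : ℕ) : ℤ))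
    | some (Instr.bbasic a) => T j = pccInf a (T (j-1)) (T (j-1))
    | some (Instr.bptest a) => T j = pccInf a (T (j-1)) (T (j-2))
    | some (Instr.bntest a) => T j = pccInf a (T (j-2)) (T (j-1))
    | some (Instr.bjump k) => T j = T (j - ((k : ℕ) : ℤ))
    | some Instr.halt => T j = Sinf A
    | some Instr.abort => T j = Dinf A

/-- Position `j` holds a jump instruction of `X` whose target is `j'`. -/
def JumpsTo {A : Type} (X : List (Instr A)) (j j' : ℤ) : Prop :=
  (∃ k : ℕ+, instAt X j = some (Instr.fjump k) ∧ j' = j + ((k : ℕ) : ℤ)) ∨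
  (∃ k : ℕ+, instAt X j = some (Instr.bjump k) ∧ j' = j - ((k : ℕ) : ℤ))

/-- From position `j` the equations yield a loop of consecutive jumps
without any actions. -/
def InJumpLoop {A : Type} (X : List (Instr A)) (j : ℤ) : Prop :=
  ∃ f : ℕ → ℤ, f 0 = j ∧ ∀ n, JumpsTo X (f n) (f (n+1))

/-- The rule that a loop of jumps without any actions extracts to `D`. -/
def LoopRule {A : Type} (X : List (Instr A)) (T : ℤ → BTAinf A) : Prop :=
  ∀ j : ℤ, InJumpLoop X j → T j = Dinf A

/-- One step of control from position `j` to position `j'` in `X`. -/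
def Succ {A : Type} (X : List (Instr A)) (j j' : ℤ) : Prop :=
  match instAt X j with
  | some (Instr.fbasic _) => j' = j + 1
  | some (Instr.fptest _) => j' = j + 1 ∨ j' = j + 2
  | some (Instr.fntest _) => j' = j + 1 ∨ j' = j + 2
  | some (Instr.fjump k) => j' = j + ((k : ℕ) : ℤ)
  | some (Instr.bbasic _) => j' = j - 1
  | some (Instr.bptest _) => j' = j - 1 ∨ j' = j - 2
  | some (Instr.bntest _) => j' = j - 1 ∨ j' = j - 2
  | some (Instr.bjump k) => j' = j - ((k : ℕ) : ℤ)
  | _ => False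

/-- A `C`-program: a nonempty instruction sequence in which control,
started anywhere inside the sequence, never reaches a position outside it. -/
def CProgram {A : Type} (X : List (Instr A)) : Prop :=
  X ≠ [] ∧
  ∀ j j' : ℤ, 1 ≤ j → j ≤ (X.length : ℤ) →
    Relation.ReflTransGen (Succ X) j j' → 1 ≤ j' ∧ j' ≤ (X.length : ℤ)

/-- Membership in the instruction set `{+/a, /#k, #k\, !, #}`. -/
def InReducedSet {A : Type} (ins : Instr A) : Prop :=
  match ins with
  | Instr.fptest _ => True
  | Instr.fjump _ => True
  | Instr.bjump _ => True
  | Instr.halt => True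
  | Instr.abort => True
  | _ => False

namespace CHelper

variable {A : Type}

/-- Jump instruction with signed offset `d` (never used with `d = 0`). -/
def jmp (d : ℤ) : Instr A :=
  if h : 0 < d then .fjump ⟨d.toNat, by omega⟩
  else if h' : d < 0 then .bjump ⟨(-d).toNat, by omega⟩
  else .abort

/-- Totalized version of `t`. -/
def tAt {n : ℕ} (t : Fin n → LinTerm A n) (q : ℕ) : LinTerm A n :=
  if h : q < n then t ⟨q, h⟩ else .D

/-- Totalized version of `P`. -/
def Pat {n : ℕ} (P : Fin n → BTAinf A) (q : ℕ) : BTAinf A :=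
  if h : q < n then P ⟨q, h⟩ else Dinf A

lemma tAt_coe {n : ℕ} (t : Fin n → LinTerm A n) (i : Fin n) : tAt t (i : ℕ) = t i := by
  unfold tAt; rw [dif_pos i.isLt]

lemma Pat_coe {n : ℕ} (P : Fin n → BTAinf A) (i : Fin n) : Pat P (i : ℕ) = P i := by
  unfold Pat; rw [dif_pos i.isLt]

/-- Instruction at 0-based position `q`. -/
def insOf {n : ℕ} (t : Fin n → LinTerm A n) (q : ℕ) : Instr A :=
  match tAt t (q / 3) with
  | .S => if q % 3 = 0 then .halt else .abort
  | .D => .abort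
  | .pcc j a k =>
      if q % 3 = 0 then .fptest a
      else if q % 3 = 1 then jmp (3 * (((j : ℕ) : ℤ) - ((q / 3 : ℕ) : ℤ)) - 1)
      else jmp (3 * (((k : ℕ) : ℤ) - ((q / 3 : ℕ) : ℤ)) - 2)

def Xof {n : ℕ} (t : Fin n → LinTerm A n) : List (Instr A) :=
  List.ofFn (fun q : Fin (3 * n) => insOf t (q : ℕ))

lemma length_Xof {n : ℕ} (t : Fin n → LinTerm A n) : (Xof t).length = 3 * n :=
  List.length_ofFn

lemma instAt_Xof {n : ℕ} (t : Fin n → LinTerm A n) (m : ℤ) :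
    instAt (Xof t) m =
      if 1 ≤ m ∧ m ≤ 3 * (n : ℤ) then some (insOf t (m - 1).toNat) else none := by
  have hl : (((Xof t).length : ℕ) : ℤ) = 3 * (n : ℤ) := by
    rw [length_Xof]; push_cast; ring
  unfold instAt
  rw [hl]
  by_cases h : 1 ≤ m ∧ m ≤ 3 * (n : ℤ)
  · rw [if_pos h, if_pos h]
    have hq : (m - 1).toNat < 3 * n := by omega
    unfold Xof
    rw [List.getElem?_ofFn, dif_pos hq]
  · rw [if_neg h, if_neg h]

lemma insOf_eval {n : ℕ} (t : Fin n → LinTerm A n) (i : Fin n) (r : ℕ) (hr : r < 3) :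
    insOf t (3 * (i : ℕ) + r) =
      (match t i with
      | .S => if r = 0 then .halt else .abort
      | .D => .abort
      | .pcc j a k =>
          if r = 0 then .fptest a
          else if r = 1 then jmp (3 * (((j : ℕ) : ℤ) - ((i : ℕ) : ℤ)) - 1)
          else jmp (3 * (((k : ℕ) : ℤ) - ((i : ℕ) : ℤ)) - 2)) := by
  have hdiv : (3 * (i : ℕ) + r) / 3 = (i : ℕ) := by omega
  have hmod : (3 * (i : ℕ) + r) % 3 = r := by omega
  unfold insOf
  rw [hdiv, hmod, tAt_coe]

/-- The thread assignment. -/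
def Tof {n : ℕ} (t : Fin n → LinTerm A n) (P : Fin n → BTAinf A) (m : ℤ) : BTAinf A :=
  if 1 ≤ m ∧ m ≤ 3 * (n : ℤ) then
    if (m - 1).toNat % 3 = 0 then Pat P ((m - 1).toNat / 3)
    else match tAt t ((m - 1).toNat / 3) with
      | .pcc j _ k => if (m - 1).toNat % 3 = 1 then P j else P k
      | _ => Dinf A
  else Dinf A

lemma Tof_out {n : ℕ} (t : Fin n → LinTerm A n) (P : Fin n → BTAinf A) (m : ℤ)
    (h : ¬(1 ≤ m ∧ m ≤ 3 * (n : ℤ))) : Tof t P m = Dinf A := by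
  unfold Tof; rw [if_neg h]

lemma Tof_eval {n : ℕ} (t : Fin n → LinTerm A n) (P : Fin n → BTAinf A)
    (i : Fin n) (r : ℕ) (hr : r < 3) (m : ℤ) (hm : m = 3 * (i : ℕ) + r + 1) :
    Tof t P m =
      (if r = 0 then P i
       else match t i with
       | .pcc j _ k => if r = 1 then P j else P k
       | _ => Dinf A) := by
  have hin := i.isLt
  have h1 : (1 : ℤ) ≤ m ∧ m ≤ 3 * (n : ℤ) := by constructor <;> omega
  have hq : (m - 1).toNat = 3 * (i : ℕ) + r := by omega
  have hdiv : (3 * (i : ℕ) + r) / 3 = (i : ℕ) := by omega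
  have hmod : (3 * (i : ℕ) + r) % 3 = r := by omega
  unfold Tof
  rw [if_pos h1, hq, hdiv, hmod, tAt_coe, Pat_coe]

lemma jmp_reduced (d : ℤ) : InReducedSet (jmp (A := A) d) := by
  unfold jmp InReducedSet
  split_ifs <;> trivial

lemma insOf_reduced {n : ℕ} (t : Fin n → LinTerm A n) (q : ℕ) :
    InReducedSet (insOf t q) := by
  unfold insOf
  cases tAt t (q / 3) with
  | S => unfold InReducedSet; split_ifs <;> trivial
  | D => trivial
  | pcc j a k =>
      split_ifs with h1 h2
      · trivial
      · exact jmp_reduced _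
      · exact jmp_reduced _

/-- Structural analysis of the instruction found at a position of `Xof t`. -/
lemma shape {n : ℕ} (t : Fin n → LinTerm A n) (m : ℤ) (c : Instr A)
    (h : instAt (Xof t) m = some c) :
    ∃ (i : Fin n) (r : ℕ), r < 3 ∧ m = 3 * ((i : ℕ) : ℤ) + (r : ℤ) + 1 ∧
      ((c = .halt ∧ t i = .S ∧ r = 0) ∨
       (c = .abort ∧ ((t i = .S ∧ r ≠ 0) ∨ t i = .D)) ∨
       (∃ a jj kk, t i = .pcc jj a kk ∧
         ((r = 0 ∧ c = .fptest a) ∨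
          (r = 1 ∧ c = jmp (3 * (((jj : ℕ) : ℤ) - ((i : ℕ) : ℤ)) - 1)) ∨
          (r = 2 ∧ c = jmp (3 * (((kk : ℕ) : ℤ) - ((i : ℕ) : ℤ)) - 2))))) := by
  rw [instAt_Xof] at h
  by_cases hm : 1 ≤ m ∧ m ≤ 3 * (n : ℤ)
  · rw [if_pos hm] at h
    have hc2 : insOf t (m - 1).toNat = c := Option.some.inj h
    set q := (m - 1).toNat with hqdef
    have hqlt : q < 3 * n := by omega
    have hin : q / 3 < n := by omega
    have hq3 : 3 * (((⟨q / 3, hin⟩ : Fin n) : ℕ)) + q % 3 = q := by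
      simp only [Fin.val_mk]; omega
    have hc3 : insOf t (3 * (((⟨q / 3, hin⟩ : Fin n) : ℕ)) + q % 3) = c := by
      rw [hq3]; exact hc2
    rw [insOf_eval t ⟨q / 3, hin⟩ (q % 3) (by omega)] at hc3
    refine ⟨⟨q / 3, hin⟩, q % 3, by omega, by simp only [Fin.val_mk]; omega, ?_⟩
    have hr : q % 3 = 0 ∨ q % 3 = 1 ∨ q % 3 = 2 := by omega
    rcases hr with h0 | h1 | h2
    · rw [h0] at hc3 ⊢
      cases ht : t ⟨q / 3, hin⟩ with
      | S =>
        rw [ht] at hc3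
        have h4 : Instr.halt = c := hc3
        subst h4
        exact Or.inl ⟨rfl, rfl, rfl⟩
      | D =>
        rw [ht] at hc3
        have h4 : Instr.abort = c := hc3
        subst h4
        exact Or.inr (Or.inl ⟨rfl, Or.inr rfl⟩)
      | pcc jj a kk =>
        rw [ht] at hc3
        have h4 : Instr.fptest a = c := hc3
        subst h4
        exact Or.inr (Or.inr ⟨a, jj, kk, rfl, Or.inl ⟨rfl, rfl⟩⟩)
    · rw [h1] at hc3 ⊢
      cases ht : t ⟨q / 3, hin⟩ with
      | S =>
        rw [ht] at hc3
        have h4 : Instr.abort = c := hc3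
        subst h4
        exact Or.inr (Or.inl ⟨rfl, Or.inl ⟨rfl, one_ne_zero⟩⟩)
      | D =>
        rw [ht] at hc3
        have h4 : Instr.abort = c := hc3
        subst h4
        exact Or.inr (Or.inl ⟨rfl, Or.inr rfl⟩)
      | pcc jj a kk =>
        rw [ht] at hc3
        have h4 : jmp (3 * (((jj : ℕ) : ℤ) - (((⟨q / 3, hin⟩ : Fin n) : ℕ) : ℤ)) - 1) = c := hc3
        subst h4
        exact Or.inr (Or.inr ⟨a, jj, kk, rfl, Or.inr (Or.inl ⟨rfl, rfl⟩)⟩)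
    · rw [h2] at hc3 ⊢
      cases ht : t ⟨q / 3, hin⟩ with
      | S =>
        rw [ht] at hc3
        have h4 : Instr.abort = c := hc3
        subst h4
        exact Or.inr (Or.inl ⟨rfl, Or.inl ⟨rfl, by decide⟩⟩)
      | D =>
        rw [ht] at hc3
        have h4 : Instr.abort = c := hc3
        subst h4
        exact Or.inr (Or.inl ⟨rfl, Or.inr rfl⟩)
      | pcc jj a kk =>
        rw [ht] at hc3
        have h4 : jmp (3 * (((kk : ℕ) : ℤ) - (((⟨q / 3, hin⟩ : Fin n) : ℕ) : ℤ)) - 2) = c := hc3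
        subst h4
        exact Or.inr (Or.inr ⟨a, jj, kk, rfl, Or.inr (Or.inr ⟨rfl, rfl⟩)⟩)
  · rw [if_neg hm] at h; exact absurd h (by simp)

lemma jmp_fjump {d : ℤ} {k : ℕ+} (h : jmp (A := A) d = .fjump k) :
    0 < d ∧ ((k : ℕ) : ℤ) = d := by
  unfold jmp at h
  by_cases h1 : 0 < d
  · rw [dif_pos h1] at h
    injection h with h'
    refine ⟨h1, ?_⟩
    rw [← h']
    show ((d.toNat : ℕ) : ℤ) = d
    omega
  · by_cases h2 : d < 0
    · rw [dif_neg h1, dif_pos h2] at h; simp at h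
    · rw [dif_neg h1, dif_neg h2] at h; simp at h

lemma jmp_bjump {d : ℤ} {k : ℕ+} (h : jmp (A := A) d = .bjump k) :
    d < 0 ∧ ((k : ℕ) : ℤ) = -d := by
  unfold jmp at h
  by_cases h1 : 0 < d
  · rw [dif_pos h1] at h; simp at h
  · by_cases h2 : d < 0
    · rw [dif_neg h1, dif_pos h2] at h
      injection h with h'
      refine ⟨h2, ?_⟩
      rw [← h']
      show (((-d).toNat : ℕ) : ℤ) = -d
      omega
    · rw [dif_neg h1, dif_neg h2] at h; simp at h

lemma jumpsTo_spec {n : ℕ} (t : Fin n → LinTerm A n) {m m' : ℤ}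
    (h : JumpsTo (Xof t) m m') : ∃ jj : Fin n, m' = 3 * ((jj : ℕ) : ℤ) + 1 := by
  rcases h with ⟨k, hk, he⟩ | ⟨k, hk, he⟩ <;>
  · obtain ⟨i, r, hr, hm, hsh⟩ := shape t m _ hk
    rcases hsh with ⟨hc, -⟩ | ⟨hc, -⟩ | ⟨a, jj, kk, ht, hcs⟩
    · simp at hc
    · simp at hc
    · rcases hcs with ⟨h0, hc⟩ | ⟨h1, hc⟩ | ⟨h2, hc⟩
      · simp at hc
      · first
          | (obtain ⟨hd, hk2⟩ := jmp_fjump hc.symm; exact ⟨jj, by omega⟩)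
          | (obtain ⟨hd, hk2⟩ := jmp_bjump hc.symm; exact ⟨jj, by omega⟩)
      · first
          | (obtain ⟨hd, hk2⟩ := jmp_fjump hc.symm; exact ⟨kk, by omega⟩)
          | (obtain ⟨hd, hk2⟩ := jmp_bjump hc.symm; exact ⟨kk, by omega⟩)

lemma not_jumpsTo_start {n : ℕ} (t : Fin n → LinTerm A n) (jj : Fin n) (m' : ℤ) :
    ¬ JumpsTo (Xof t) (3 * ((jj : ℕ) : ℤ) + 1) m' := by
  intro h
  have hjlt := jj.isLt
  have hb : (1 : ℤ) ≤ 3 * ((jj : ℕ) : ℤ) + 1 ∧ 3 * ((jj : ℕ) : ℤ) + 1 ≤ 3 * (n : ℤ) := by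
    constructor <;> omega
  have hq : ((3 * ((jj : ℕ) : ℤ) + 1) - 1).toNat = 3 * (jj : ℕ) + 0 := by omega
  have hi : instAt (Xof t) (3 * ((jj : ℕ) : ℤ) + 1) = some (insOf t (3 * (jj : ℕ) + 0)) := by
    rw [instAt_Xof, if_pos hb, hq]
  rw [insOf_eval t jj 0 (by omega)] at hi
  rcases h with ⟨k, hk, -⟩ | ⟨k, hk, -⟩ <;>
    rw [hk] at hi <;>
    cases ht : t jj <;> rw [ht] at hi <;> simp at hi

lemma loopRule {n : ℕ} (t : Fin n → LinTerm A n) (P : Fin n → BTAinf A) :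
    LoopRule (Xof t) (Tof t P) := by
  intro m hm
  exfalso
  obtain ⟨f, hf0, hstep⟩ := hm
  obtain ⟨jj, hjj⟩ := jumpsTo_spec t (hstep 0)
  exact not_jumpsTo_start t jj (f 2) (hjj ▸ hstep 1)

lemma succ_jmp {n : ℕ} (t : Fin n → LinTerm A n) {m m' d : ℤ} (hd : d ≠ 0)
    (hi : instAt (Xof t) m = some (jmp d)) (hs : Succ (Xof t) m m') : m' = m + d := by
  unfold Succ at hs
  rw [hi] at hs
  unfold jmp at hs
  split_ifs at hs with hp hn
  · have hs' : m' = m + ((d.toNat : ℕ) : ℤ) := hs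
    omega
  · have hs' : m' = m - (((-d).toNat : ℕ) : ℤ) := hs
    omega
  · omega

lemma succ_closed {n : ℕ} (t : Fin n → LinTerm A n) (m m' : ℤ)
    (hs : Succ (Xof t) m m') : 1 ≤ m' ∧ m' ≤ 3 * (n : ℤ) := by
  rcases hi : instAt (Xof t) m with _ | c
  · unfold Succ at hs; rw [hi] at hs; exact hs.elim
  · obtain ⟨i, r, hr, hm, hsh⟩ := shape t m c hi
    have hilt := i.isLt
    rcases hsh with ⟨hc, -⟩ | ⟨hc, -⟩ | ⟨a, jj, kk, ht, hcs⟩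
    · subst hc; unfold Succ at hs; rw [hi] at hs; exact hs.elim
    · subst hc; unfold Succ at hs; rw [hi] at hs; exact hs.elim
    · have hjlt := jj.isLt
      have hklt := kk.isLt
      rcases hcs with ⟨h0, hc⟩ | ⟨h1, hc⟩ | ⟨h2, hc⟩
      · subst hc
        unfold Succ at hs; rw [hi] at hs
        rcases hs with h | h <;> constructor <;> omega
      · have hstep := succ_jmp t (d := 3 * (((jj : ℕ) : ℤ) - ((i : ℕ) : ℤ)) - 1)
          (by omega) (by rw [hi, hc]) hs
        constructor <;> omega
      · have hstep := succ_jmp t (d := 3 * (((kk : ℕ) : ℤ) - ((i : ℕ) : ℤ)) - 2)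
          (by omega) (by rw [hi, hc]) hs
        constructor <;> omega

lemma cprog {n : ℕ} (t : Fin n → LinTerm A n) (hn : 0 < n) : CProgram (Xof t) := by
  constructor
  · intro h0
    have hl := length_Xof t
    rw [h0] at hl
    simp at hl
    omega
  · intro j j' h1 h2 hrt
    have hl : (((Xof t).length : ℕ) : ℤ) = 3 * (n : ℤ) := by rw [length_Xof]; push_cast; ring
    rw [hl] at h2 ⊢
    induction hrt with
    | refl => exact ⟨h1, h2⟩
    | tail hab hbc ih => exact succ_closed t _ _ hbc

lemma Xof_reduced {n : ℕ} (t : Fin n → LinTerm A n) :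
    ∀ ins ∈ Xof t, InReducedSet ins := by
  intro ins h
  rw [Xof, List.mem_ofFn] at h
  obtain ⟨q, hq⟩ := h
  rw [← hq]
  exact insOf_reduced t _

lemma extr {n : ℕ} (t : Fin n → LinTerm A n) (P : Fin n → BTAinf A)
    (hP : IsSolution t P) : ExtrEqns (Xof t) (Tof t P) := by
  intro m
  by_cases hm : 1 ≤ m ∧ m ≤ 3 * (n : ℤ)
  case neg =>
    have hi : instAt (Xof t) m = none := by rw [instAt_Xof, if_neg hm]
    rw [hi]
    exact Tof_out t P m hm
  case pos =>
    have hi : instAt (Xof t) m = some (insOf t (m - 1).toNat) := by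
      rw [instAt_Xof, if_pos hm]
    obtain ⟨i, r, hr, hmm, hsh⟩ := shape t m _ hi
    rw [hi]
    rcases hsh with ⟨hc, ht, h0⟩ | ⟨hc, hcase⟩ | ⟨a, jj, kk, ht, hcs⟩
    · rw [hc]
      show Tof t P m = Sinf A
      rw [Tof_eval t P i 0 (by omega) m (by omega), ht]
      have hS := hP i
      rw [ht] at hS
      exact hS
    · rw [hc]
      show Tof t P m = Dinf A
      rw [Tof_eval t P i r hr m hmm]
      rcases hcase with ⟨ht, hr0⟩ | ht
      · rw [if_neg hr0, ht]
      · have hD := hP i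
        rw [ht] at hD
        have hD' : P i = Dinf A := hD
        by_cases h0 : r = 0
        · rw [if_pos h0]; exact hD'
        · rw [if_neg h0, ht]
    · have hpcc := hP i
      rw [ht] at hpcc
      have hpcc' : P i = pccInf a (P jj) (P kk) := hpcc
      rcases hcs with ⟨h0, hc⟩ | ⟨h1, hc⟩ | ⟨h2, hc⟩
      · rw [hc]
        show Tof t P m = pccInf a (Tof t P (m + 1)) (Tof t P (m + 2))
        rw [Tof_eval t P i 0 (by omega) m (by omega),
            Tof_eval t P i 1 (by omega) (m + 1) (by omega),
            Tof_eval t P i 2 (by omega) (m + 2) (by omega), ht]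
        exact hpcc'
      · rw [hc]
        set d := 3 * (((jj : ℕ) : ℤ) - ((i : ℕ) : ℤ)) - 1 with hd
        have hd0 : d ≠ 0 := by omega
        by_cases hp : 0 < d
        · rw [show jmp (A := A) d = Instr.fjump ⟨d.toNat, by omega⟩ from by
            unfold jmp; rw [dif_pos hp]]
          show Tof t P m = Tof t P (m + ((d.toNat : ℕ) : ℤ))
          rw [Tof_eval t P i 1 (by omega) m (by omega),
              Tof_eval t P jj 0 (by omega) _ (by omega), ht]
          rfl
        · have hneg : d < 0 := by omega
          rw [show jmp (A := A) d = Instr.bjump ⟨(-d).toNat, by omega⟩ from by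
            unfold jmp; rw [dif_neg hp, dif_pos hneg]]
          show Tof t P m = Tof t P (m - (((-d).toNat : ℕ) : ℤ))
          rw [Tof_eval t P i 1 (by omega) m (by omega),
              Tof_eval t P jj 0 (by omega) _ (by omega), ht]
          rfl
      · rw [hc]
        set d := 3 * (((kk : ℕ) : ℤ) - ((i : ℕ) : ℤ)) - 2 with hd
        have hd0 : d ≠ 0 := by omega
        by_cases hp : 0 < d
        · rw [show jmp (A := A) d = Instr.fjump ⟨d.toNat, by omega⟩ from by
            unfold jmp; rw [dif_pos hp]]
          show Tof t P m = Tof t P (m + ((d.toNat : ℕ) : ℤ))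
          rw [Tof_eval t P i 2 (by omega) m (by omega),
              Tof_eval t P kk 0 (by omega) _ (by omega), ht]
          rfl
        · have hneg : d < 0 := by omega
          rw [show jmp (A := A) d = Instr.bjump ⟨(-d).toNat, by omega⟩ from by
            unfold jmp; rw [dif_neg hp, dif_pos hneg]]
          show Tof t P m = Tof t P (m - (((-d).toNat : ℕ) : ℤ))
          rw [Tof_eval t P i 2 (by omega) m (by omega),
              Tof_eval t P kk 0 (by omega) _ (by omega), ht]
          rfl

/-- Relabelling of a linear term along a permutation. -/
def permTerm {n : ℕ} (e : Fin n ≃ Fin n) : LinTerm A n → LinTerm A n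
  | .S => .S
  | .D => .D
  | .pcc j a k => .pcc (e.symm j) a (e.symm k)

def permSpec {n : ℕ} (e : Fin n ≃ Fin n) (t : Fin n → LinTerm A n) :
    Fin n → LinTerm A n := fun m => permTerm e (t (e m))

lemma isSolution_perm {n : ℕ} (e : Fin n ≃ Fin n) (t : Fin n → LinTerm A n)
    (P : Fin n → BTAinf A) (hP : IsSolution t P) :
    IsSolution (permSpec e t) (fun m => P (e m)) := by
  intro m
  unfold permSpec
  cases h' : t (e m) with
  | S =>
    have hS := hP (e m)
    rw [h'] at hS
    exact hS
  | D =>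
    have hD := hP (e m)
    rw [h'] at hD
    exact hD
  | pcc j a k =>
    have hp := hP (e m)
    rw [h'] at hp
    have hp' : P (e m) = pccInf a (P j) (P k) := hp
    show P (e m) = pccInf a (P (e (e.symm j))) (P (e (e.symm k)))
    simp only [Equiv.apply_symm_apply]
    exact hp'

end CHelper

/-- Every regular thread (a component `P i` of the solution of a finite
linear recursive specification) is produced by a `C`-program `X` via
left-to-right thread extraction, `⌊X⌋₁ = P i`; moreover `X` can be chosen
using only instructions from `{+/a, /#k, #k\, !, #}`. -/
theorem regular_thread_produced_by_program {A : Type} {n : ℕ}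
    (t : Fin n → LinTerm A n) (P : Fin n → BTAinf A)
    (hP : IsSolution t P) (i : Fin n) :
    ∃ X : List (Instr A), CProgram X ∧ (∀ ins ∈ X, InReducedSet ins) ∧
      ∃ T : ℤ → BTAinf A, ExtrEqns X T ∧ LoopRule X T ∧ T 1 = P i := by
  have hn : 0 < n := i.pos
  refine ⟨CHelper.Xof (CHelper.permSpec (Equiv.swap ⟨0, hn⟩ i) t),
    CHelper.cprog _ hn,
    CHelper.Xof_reduced _,
    CHelper.Tof (CHelper.permSpec (Equiv.swap ⟨0, hn⟩ i) t)
      (fun m => P (Equiv.swap ⟨0, hn⟩ i m)),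
    CHelper.extr _ _ (CHelper.isSolution_perm _ t P hP),
    CHelper.loopRule _ _, ?_⟩
  have h1 : (1 : ℤ) = 3 * (((⟨0, hn⟩ : Fin n) : ℕ) : ℤ) + ((0 : ℕ) : ℤ) + 1 := by simp
  rw [CHelper.Tof_eval _ _ ⟨0, hn⟩ 0 (by omega) 1 h1]
  show P (Equiv.swap ⟨0, hn⟩ i ⟨0, hn⟩) = P i
  rw [Equiv.swap_apply_left]
end

section
/- Every regular thread can be produced by a program over the reduced instruction set {+/a, /#k, #k\, !} (positive forward tests, forward and backward jumps, and termination only), using the encodings S ↦ !;/#1;#1\ and D ↦ /#1;/#1;#1\. -/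
/-- Membership in the reduced instruction set `{+/a, /#k, #k\, !}`:
positive forward tests, forward and backward jumps, and termination only. -/
def InReducedSet' {A : Type} (ins : Instr A) : Prop :=
  match ins with
  | Instr.fptest _ => True
  | Instr.fjump _ => True
  | Instr.bjump _ => True
  | Instr.halt => True
  | _ => False

namespace RTRP

variable {A : Type} {n : ℕ}

/-- A jump instruction placed at 1-based position `s` whose target is `g`. -/
def jmp (s g : ℕ) : Instr A :=
  if _h : s < g then Instr.fjump ⟨g - s, by omega⟩
  else if _h' : g < s then Instr.bjump ⟨s - g, by omega⟩
  else Instr.halt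

lemma jmp_reduced (s g : ℕ) : InReducedSet' (jmp (A := A) s g) := by
  unfold jmp
  split
  · trivial
  · split <;> trivial

lemma jmp_cases (s g : ℕ) (h : s ≠ g) : ∃ k : ℕ+,
    (jmp (A := A) s g = Instr.fjump k ∧ (g : ℤ) = (s : ℤ) + ((k : ℕ) : ℤ)) ∨
    (jmp (A := A) s g = Instr.bjump k ∧ (g : ℤ) = (s : ℤ) - ((k : ℕ) : ℤ)) := by
  rcases lt_or_gt_of_ne h with hlt | hgt
  · refine ⟨⟨g - s, by omega⟩, Or.inl ⟨by unfold jmp; rw [dif_pos hlt], ?_⟩⟩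
    show (g : ℤ) = (s : ℤ) + ((g - s : ℕ) : ℤ)
    omega
  · refine ⟨⟨s - g, by omega⟩, Or.inr ⟨?_, ?_⟩⟩
    · unfold jmp; rw [dif_neg (by omega), dif_pos hgt]
    · show (g : ℤ) = (s : ℤ) - ((s - g : ℕ) : ℤ)
      omega

/-- The three instructions of the block encoding a linear term (block index
`m+1`, i.e. starting at 1-based position `3*m+4`). -/
def termIns (m : ℕ) : LinTerm A n → ℕ → Instr A
  | .S, 0 => Instr.halt
  | .S, 1 => jmp (3*m+5) (3*m+6)
  | .S, _ => jmp (3*m+6) (3*m+5)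
  | .D, 0 => jmp (3*m+4) (3*m+5)
  | .D, 1 => jmp (3*m+5) (3*m+6)
  | .D, _ => jmp (3*m+6) (3*m+5)
  | .pcc _ a _, 0 => Instr.fptest a
  | .pcc j _ _, 1 => jmp (3*m+5) (3*(j : ℕ)+4)
  | .pcc _ _ k, _ => jmp (3*m+6) (3*(k : ℕ)+4)

/-- Instruction of block `m` at offset `r ∈ {0,1,2}`. -/
def blockIns (t : Fin n → LinTerm A n) (i : Fin n) : ℕ → ℕ → Instr A
  | 0, 0 => jmp 1 (3*(i : ℕ)+4)
  | 0, 1 => jmp 2 3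
  | 0, _ => jmp 3 2
  | m+1, r => if h : m < n then termIns m (t ⟨m, h⟩) r else Instr.halt

/-- The program: block `0` forwards control to the block of variable `i`,
block `m+1` encodes the linear term `t m`. -/
def prog (t : Fin n → LinTerm A n) (i : Fin n) : List (Instr A) :=
  (List.range (3*(n+1))).map (fun p => blockIns t i (p / 3) (p % 3))

/-- Intended thread at offsets `1`, `2` of a term block. -/
def termVal (P : Fin n → BTAinf A) : LinTerm A n → ℕ → BTAinf A
  | .pcc j _ _, 1 => P j
  | .pcc _ _ k, _ => P k
  | _, _ => Dinf A

/-- Intended thread at block `m`, offset `r`. -/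
def blockVal (t : Fin n → LinTerm A n) (P : Fin n → BTAinf A) (i : Fin n) :
    ℕ → ℕ → BTAinf A
  | 0, 0 => P i
  | 0, _ => Dinf A
  | m+1, 0 => if h : m < n then P ⟨m, h⟩ else Dinf A
  | m+1, r => if h : m < n then termVal P (t ⟨m, h⟩) r else Dinf A

/-- The extracted-thread function. -/
def Tf (t : Fin n → LinTerm A n) (P : Fin n → BTAinf A) (i : Fin n)
    (j : ℤ) : BTAinf A :=
  if 1 ≤ j ∧ j ≤ 3*(n+1) then
    blockVal t P i ((j-1).toNat / 3) ((j-1).toNat % 3)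
  else Dinf A

variable (t : Fin n → LinTerm A n) (P : Fin n → BTAinf A) (i : Fin n)

lemma prog_length : ((prog t i).length : ℤ) = 3*(n+1) := by
  simp [prog]

lemma instAt_val (p : ℕ) (h1 : 1 ≤ p) (h2 : p ≤ 3*(n+1)) :
    instAt (prog t i) (p : ℤ) = some (blockIns t i ((p-1)/3) ((p-1)%3)) := by
  unfold instAt
  rw [if_pos ⟨by exact_mod_cast h1, by rw [prog_length]; push_cast; omega⟩]
  rw [show (((p : ℤ)) - 1).toNat = p - 1 from by omega]
  unfold prog
  rw [List.getElem?_map, List.getElem?_range (by omega)]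
  rfl

lemma instAt_b (p m r : ℕ) (hp : p = 3*m+r+1) (hr : r < 3) (hm : m ≤ n) :
    instAt (prog t i) (p : ℤ) = some (blockIns t i m r) := by
  rw [instAt_val t i p (by omega) (by omega)]
  have e1 : (p-1)/3 = m := by omega
  have e2 : (p-1)%3 = r := by omega
  rw [e1, e2]

lemma instAt_out (j : ℤ) (h : ¬(1 ≤ j ∧ j ≤ 3*(n+1))) :
    instAt (prog t i) j = none := by
  unfold instAt
  rw [if_neg]
  rw [prog_length]
  omega

lemma Tf_val (p : ℕ) (h1 : 1 ≤ p) (h2 : p ≤ 3*(n+1)) :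
    Tf t P i (p : ℤ) = blockVal t P i ((p-1)/3) ((p-1)%3) := by
  unfold Tf
  rw [if_pos ⟨by exact_mod_cast h1, by push_cast; omega⟩]
  rw [show (((p : ℤ)) - 1).toNat = p - 1 from by omega]

lemma Tf_b (p m r : ℕ) (hp : p = 3*m+r+1) (hr : r < 3) (hm : m ≤ n) :
    Tf t P i (p : ℤ) = blockVal t P i m r := by
  rw [Tf_val t P i p (by omega) (by omega)]
  have e1 : (p-1)/3 = m := by omega
  have e2 : (p-1)%3 = r := by omega
  rw [e1, e2]

lemma Tf_out (j : ℤ) (h : ¬(1 ≤ j ∧ j ≤ 3*(n+1))) :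
    Tf t P i j = Dinf A := if_neg h

lemma decomp (j : ℤ) (h1 : 1 ≤ j) (h2 : j ≤ 3*(n+1)) :
    ∃ m r : ℕ, r < 3 ∧ m ≤ n ∧ j = ((3*m+r+1 : ℕ) : ℤ) := by
  refine ⟨(j-1).toNat / 3, (j-1).toNat % 3, by omega, by omega, by omega⟩

/-- The thread-extraction condition at a single position. -/
def ExtrAt (X : List (Instr A)) (T : ℤ → BTAinf A) (j : ℤ) : Prop :=
  match instAt X j with
  | none => T j = Dinf A
  | some (Instr.fbasic a) => T j = pccInf a (T (j+1)) (T (j+1))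
  | some (Instr.fptest a) => T j = pccInf a (T (j+1)) (T (j+2))
  | some (Instr.fntest a) => T j = pccInf a (T (j+2)) (T (j+1))
  | some (Instr.fjump k) => T j = T (j + ((k : ℕ) : ℤ))
  | some (Instr.bbasic a) => T j = pccInf a (T (j-1)) (T (j-1))
  | some (Instr.bptest a) => T j = pccInf a (T (j-1)) (T (j-2))
  | some (Instr.bntest a) => T j = pccInf a (T (j-2)) (T (j-1))
  | some (Instr.bjump k) => T j = T (j - ((k : ℕ) : ℤ))
  | some Instr.halt => T j = Sinf A
  | some Instr.abort => T j = Dinf A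

lemma extrAt_none {X : List (Instr A)} {T : ℤ → BTAinf A} {j : ℤ}
    (hins : instAt X j = none) (hT : T j = Dinf A) : ExtrAt X T j := by
  unfold ExtrAt; rw [hins]; exact hT

lemma extrAt_halt {X : List (Instr A)} {T : ℤ → BTAinf A} {j : ℤ}
    (hins : instAt X j = some Instr.halt) (hT : T j = Sinf A) : ExtrAt X T j := by
  unfold ExtrAt; rw [hins]; exact hT

lemma extrAt_fptest {X : List (Instr A)} {T : ℤ → BTAinf A} {j : ℤ} {a : A}
    (hins : instAt X j = some (Instr.fptest a))
    (hT : T j = pccInf a (T (j+1)) (T (j+2))) : ExtrAt X T j := by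
  unfold ExtrAt; rw [hins]; exact hT

lemma extrAt_jmp {X : List (Instr A)} {T : ℤ → BTAinf A} {s g : ℕ}
    (hins : instAt X (s : ℤ) = some (jmp s g)) (hne : s ≠ g)
    (hT : T (s : ℤ) = T (g : ℤ)) : ExtrAt X T (s : ℤ) := by
  obtain ⟨k, ⟨h1, h2⟩ | ⟨h1, h2⟩⟩ := jmp_cases s g hne <;>
    unfold ExtrAt <;> rw [hins, h1]
  · show T (s : ℤ) = T ((s : ℤ) + ((k : ℕ) : ℤ))
    rw [show (s : ℤ) + ((k : ℕ) : ℤ) = (g : ℤ) from by omega]; exact hT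
  · show T (s : ℤ) = T ((s : ℤ) - ((k : ℕ) : ℤ))
    rw [show (s : ℤ) - ((k : ℕ) : ℤ) = (g : ℤ) from by omega]; exact hT

lemma succ_jmp {X : List (Instr A)} {s g : ℕ} {j' : ℤ}
    (hins : instAt X (s : ℤ) = some (jmp s g)) (hne : s ≠ g)
    (hS : Succ X (s : ℤ) j') : j' = (g : ℤ) := by
  obtain ⟨k, ⟨h1, h2⟩ | ⟨h1, h2⟩⟩ := jmp_cases s g hne <;>
    unfold Succ at hS <;> rw [hins, h1] at hS <;> omega

lemma jumpsTo_jmp {X : List (Instr A)} {s g : ℕ} {j' : ℤ}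
    (hins : instAt X (s : ℤ) = some (jmp s g)) (hne : s ≠ g)
    (hJ : JumpsTo X (s : ℤ) j') : j' = (g : ℤ) := by
  obtain ⟨k, ⟨h1, h2⟩ | ⟨h1, h2⟩⟩ := jmp_cases s g hne <;>
    rcases hJ with ⟨k', hk', he⟩ | ⟨k', hk', he⟩ <;>
      rw [hins, h1] at hk' <;> simp only [Option.some.injEq,
        Instr.fjump.injEq, Instr.bjump.injEq] at hk' <;>
      first
      | (subst hk'; omega)
      | exact absurd hk' (by simp)

lemma jumpsTo_not {X : List (Instr A)} {j j' : ℤ} {ins : Instr A}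
    (hins : instAt X j = some ins)
    (h1 : ∀ k, ins ≠ Instr.fjump k) (h2 : ∀ k, ins ≠ Instr.bjump k) :
    ¬ JumpsTo X j j' := by
  rintro (⟨k, hk, -⟩ | ⟨k, hk, -⟩) <;> rw [hins] at hk
  · exact h1 k (Option.some.inj hk)
  · exact h2 k (Option.some.inj hk)

lemma jumpsTo_range {X : List (Instr A)} {j j' : ℤ} (h : JumpsTo X j j') :
    1 ≤ j ∧ j ≤ (X.length : ℤ) := by
  rcases h with ⟨k, hk, -⟩ | ⟨k, hk, -⟩ <;>
    · unfold instAt at hk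
      split at hk
      · assumption
      · exact absurd hk (by simp)

lemma termIns_reduced (m : ℕ) (L : LinTerm A n) (r : ℕ) :
    InReducedSet' (termIns (A := A) (n := n) m L r) := by
  cases L <;> rcases r with - | - | r <;>
    first | trivial | exact jmp_reduced _ _

lemma blockIns_reduced (m r : ℕ) : InReducedSet' (blockIns t i m r) := by
  rcases m with - | m
  · rcases r with - | - | r <;> exact jmp_reduced _ _
  · have he : blockIns t i (m+1) r
        = if h : m < n then termIns m (t ⟨m, h⟩) r else Instr.halt := rfl
    rw [he]
    split
    · exact termIns_reduced _ _ _
    · trivial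

/-- If control jumps to the head of the block of variable `v`, then either
`t v = D` (and `P v = D`), or that head instruction is not a jump. -/
lemma head_jump_dinf (hP : IsSolution t P) (v : Fin n) {j' : ℤ}
    (hJ : JumpsTo (prog t i) (((3*(v : ℕ)+4 : ℕ)) : ℤ) j') : P v = Dinf A := by
  have hins : instAt (prog t i) (((3*(v : ℕ)+4 : ℕ)) : ℤ)
      = some (termIns (v : ℕ) (t v) 0) := by
    rw [instAt_b t i _ ((v : ℕ)+1) 0 (by ring) (by omega) (by omega)]
    simp [blockIns, v.isLt]
  rcases ht : t v with - | - | ⟨j₁, a, k₁⟩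
  · rw [ht] at hins
    exact absurd hJ (jumpsTo_not hins (by intro k h; cases h) (by intro k h; cases h))
  · have := hP v; rw [ht] at this; exact this
  · rw [ht] at hins
    exact absurd hJ (jumpsTo_not hins (by intro k h; cases h) (by intro k h; cases h))

lemma extrAll (hP : IsSolution t P) : ∀ j, ExtrAt (prog t i) (Tf t P i) j := by
  intro j
  by_cases hj : 1 ≤ j ∧ j ≤ 3*(n+1)
  swap
  · exact extrAt_none (instAt_out t i j hj) (Tf_out t P i j hj)
  obtain ⟨m, r, hr, hm, rfl⟩ := decomp j hj.1 hj.2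
  rcases m with - | m
  · -- block 0
    interval_cases r
    · -- position 1: jump to the block of `i`
      refine extrAt_jmp (g := 3*(i : ℕ)+4)
        (by rw [instAt_b t i _ 0 0 rfl (by omega) (by omega)]; rfl) (by omega) ?_
      rw [Tf_b t P i _ 0 0 rfl (by omega) (by omega),
          Tf_b t P i _ ((i : ℕ)+1) 0 (by ring) (by omega) (by omega)]
      simp [blockVal, i.isLt]
    · refine extrAt_jmp (g := 3)
        (by rw [instAt_b t i _ 0 1 rfl (by omega) (by omega)]; rfl) (by omega) ?_
      rw [Tf_b t P i _ 0 1 rfl (by omega) (by omega),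
          Tf_b t P i 3 0 2 (by ring) (by omega) (by omega)]
      rfl
    · refine extrAt_jmp (g := 2)
        (by rw [instAt_b t i _ 0 2 rfl (by omega) (by omega)]; rfl) (by omega) ?_
      rw [Tf_b t P i _ 0 2 rfl (by omega) (by omega),
          Tf_b t P i 2 0 1 (by ring) (by omega) (by omega)]
      rfl
  · -- block m+1 encoding `t ⟨m, _⟩`
    have hmn : m < n := by omega
    have hfin : (⟨m, hmn⟩ : Fin n) = ⟨m, hmn⟩ := rfl
    have hins := instAt_b t i (3*(m+1)+r+1) (m+1) r rfl hr hm
    rw [show blockIns t i (m+1) r = termIns m (t ⟨m, hmn⟩) r from by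
      simp [blockIns, hmn]] at hins
    have hPm := hP ⟨m, hmn⟩
    rcases ht : t ⟨m, hmn⟩ with - | - | ⟨j₁, a, k₁⟩ <;> rw [ht] at hins hPm
    · -- S block: ! ; /#1 ; #1\
      interval_cases r
      · refine extrAt_halt hins ?_
        rw [Tf_b t P i _ (m+1) 0 rfl (by omega) (by omega)]
        simp only [blockVal, dif_pos hmn]
        exact hPm
      · refine extrAt_jmp (s := 3*m+5) (g := 3*m+6)
          (by rw [show ((3*(m+1)+1+1 : ℕ) : ℤ) = ((3*m+5 : ℕ) : ℤ) from by push_cast; ring] at hins; exact hins)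
          (by omega) ?_
        rw [Tf_b t P i _ (m+1) 1 (by ring) (by omega) (by omega),
            Tf_b t P i _ (m+1) 2 (by ring) (by omega) (by omega)]
        simp [blockVal, termVal, hmn, ht]
      · refine extrAt_jmp (s := 3*m+6) (g := 3*m+5)
          (by rw [show ((3*(m+1)+2+1 : ℕ) : ℤ) = ((3*m+6 : ℕ) : ℤ) from by push_cast; ring] at hins; exact hins)
          (by omega) ?_
        rw [Tf_b t P i _ (m+1) 2 (by ring) (by omega) (by omega),
            Tf_b t P i _ (m+1) 1 (by ring) (by omega) (by omega)]
        simp [blockVal, termVal, hmn, ht]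
    · -- D block: /#1 ; /#1 ; #1\
      interval_cases r
      · refine extrAt_jmp (s := 3*m+4) (g := 3*m+5)
          (by rw [show ((3*(m+1)+0+1 : ℕ) : ℤ) = ((3*m+4 : ℕ) : ℤ) from by push_cast; ring] at hins; exact hins)
          (by omega) ?_
        rw [Tf_b t P i _ (m+1) 0 (by ring) (by omega) (by omega),
            Tf_b t P i _ (m+1) 1 (by ring) (by omega) (by omega)]
        simp only [blockVal, dif_pos hmn]
        rw [hPm]
        simp [termVal, ht]
      · refine extrAt_jmp (s := 3*m+5) (g := 3*m+6)
          (by rw [show ((3*(m+1)+1+1 : ℕ) : ℤ) = ((3*m+5 : ℕ) : ℤ) from by push_cast; ring] at hins; exact hins)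
          (by omega) ?_
        rw [Tf_b t P i _ (m+1) 1 (by ring) (by omega) (by omega),
            Tf_b t P i _ (m+1) 2 (by ring) (by omega) (by omega)]
        simp [blockVal, termVal, hmn, ht]
      · refine extrAt_jmp (s := 3*m+6) (g := 3*m+5)
          (by rw [show ((3*(m+1)+2+1 : ℕ) : ℤ) = ((3*m+6 : ℕ) : ℤ) from by push_cast; ring] at hins; exact hins)
          (by omega) ?_
        rw [Tf_b t P i _ (m+1) 2 (by ring) (by omega) (by omega),
            Tf_b t P i _ (m+1) 1 (by ring) (by omega) (by omega)]
        simp [blockVal, termVal, hmn, ht]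
    · -- pcc block: +/a ; jump to block j₁ ; jump to block k₁
      interval_cases r
      · refine extrAt_fptest hins ?_
        rw [Tf_b t P i _ (m+1) 0 rfl (by omega) (by omega)]
        rw [show ((3*(m+1)+0+1 : ℕ) : ℤ) + 1 = ((3*m+5 : ℕ) : ℤ) from by push_cast; ring]
        rw [show ((3*(m+1)+0+1 : ℕ) : ℤ) + 2 = ((3*m+6 : ℕ) : ℤ) from by push_cast; ring]
        rw [Tf_b t P i _ (m+1) 1 (by ring) (by omega) (by omega),
            Tf_b t P i _ (m+1) 2 (by ring) (by omega) (by omega)]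
        simp only [blockVal, dif_pos hmn, ht, termVal]
        exact hPm
      · refine extrAt_jmp (s := 3*m+5) (g := 3*(j₁ : ℕ)+4)
          (by rw [show ((3*(m+1)+1+1 : ℕ) : ℤ) = ((3*m+5 : ℕ) : ℤ) from by push_cast; ring] at hins; exact hins)
          (by omega) ?_
        rw [Tf_b t P i _ (m+1) 1 (by ring) (by omega) (by omega),
            Tf_b t P i _ ((j₁ : ℕ)+1) 0 (by ring) (by omega) (by omega)]
        simp [blockVal, termVal, hmn, ht, j₁.isLt]
      · refine extrAt_jmp (s := 3*m+6) (g := 3*(k₁ : ℕ)+4)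
          (by rw [show ((3*(m+1)+2+1 : ℕ) : ℤ) = ((3*m+6 : ℕ) : ℤ) from by push_cast; ring] at hins; exact hins)
          (by omega) ?_
        rw [Tf_b t P i _ (m+1) 2 (by ring) (by omega) (by omega),
            Tf_b t P i _ ((k₁ : ℕ)+1) 0 (by ring) (by omega) (by omega)]
        simp [blockVal, termVal, hmn, ht, k₁.isLt]

lemma loopRule (hP : IsSolution t P) : LoopRule (prog t i) (Tf t P i) := by
  rintro j ⟨f, hf0, hstep⟩
  have h01 := hstep 0
  rw [hf0] at h01
  have hrange := jumpsTo_range h01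
  rw [prog_length t i] at hrange
  obtain ⟨m, r, hr, hm, rfl⟩ := decomp j hrange.1 hrange.2
  rcases m with - | m
  · interval_cases r
    · -- position 1 jumps to block of i; a further jump forces t i = D
      have hins : instAt (prog t i) ((3*0+0+1 : ℕ) : ℤ)
          = some (jmp 1 (3*(i : ℕ)+4)) := by
        rw [instAt_b t i _ 0 0 rfl (by omega) (by omega)]; rfl
      have hf1 : f 1 = ((3*(i : ℕ)+4 : ℕ) : ℤ) := by
        have := jumpsTo_jmp (s := 1) hins (by omega) h01
        exact this
      have h12 := hstep 1
      rw [hf1] at h12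
      have hPD := head_jump_dinf t P i hP i h12
      rw [Tf_b t P i _ 0 0 rfl (by omega) (by omega)]
      exact hPD
    · rw [Tf_b t P i _ 0 1 rfl (by omega) (by omega)]; rfl
    · rw [Tf_b t P i _ 0 2 rfl (by omega) (by omega)]; rfl
  · have hmn : m < n := by omega
    have hins := instAt_b t i (3*(m+1)+r+1) (m+1) r rfl hr hm
    rw [show blockIns t i (m+1) r = termIns m (t ⟨m, hmn⟩) r from by
      simp [blockIns, hmn]] at hins
    have hPm := hP ⟨m, hmn⟩
    rcases ht : t ⟨m, hmn⟩ with - | - | ⟨j₁, a, k₁⟩ <;> rw [ht] at hins hPm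
    · interval_cases r
      · exact absurd h01 (jumpsTo_not hins (by intro k h; cases h) (by intro k h; cases h))
      · rw [Tf_b t P i _ (m+1) 1 rfl (by omega) (by omega)]
        simp [blockVal, termVal, hmn, ht]
      · rw [Tf_b t P i _ (m+1) 2 rfl (by omega) (by omega)]
        simp [blockVal, termVal, hmn, ht]
    · interval_cases r
      · rw [Tf_b t P i _ (m+1) 0 rfl (by omega) (by omega)]
        simp only [blockVal, dif_pos hmn]
        exact hPm
      · rw [Tf_b t P i _ (m+1) 1 rfl (by omega) (by omega)]
        simp [blockVal, termVal, hmn, ht]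
      · rw [Tf_b t P i _ (m+1) 2 rfl (by omega) (by omega)]
        simp [blockVal, termVal, hmn, ht]
    · interval_cases r
      · exact absurd h01 (jumpsTo_not hins (by intro k h; cases h) (by intro k h; cases h))
      · -- jumps to the head of block j₁; a further jump forces t j₁ = D
        have hins' : instAt (prog t i) ((3*m+5 : ℕ) : ℤ)
            = some (jmp (3*m+5) (3*(j₁ : ℕ)+4)) := by
          rw [show ((3*m+5 : ℕ) : ℤ) = ((3*(m+1)+1+1 : ℕ) : ℤ) from by push_cast; ring]
          exact hins
        have hf1 : f 1 = ((3*(j₁ : ℕ)+4 : ℕ) : ℤ) := by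
          have h01' := h01
          rw [show ((3*(m+1)+1+1 : ℕ) : ℤ) = ((3*m+5 : ℕ) : ℤ) from by push_cast; ring] at h01'
          have := jumpsTo_jmp hins' (by omega) h01'
          exact this
        have h12 := hstep 1
        rw [hf1] at h12
        have hPD := head_jump_dinf t P i hP j₁ h12
        rw [Tf_b t P i _ (m+1) 1 rfl (by omega) (by omega)]
        simp only [blockVal, dif_pos hmn, ht, termVal]
        exact hPD
      · have hins' : instAt (prog t i) ((3*m+6 : ℕ) : ℤ)
            = some (jmp (3*m+6) (3*(k₁ : ℕ)+4)) := by
          rw [show ((3*m+6 : ℕ) : ℤ) = ((3*(m+1)+2+1 : ℕ) : ℤ) from by push_cast; ring]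
          exact hins
        have hf1 : f 1 = ((3*(k₁ : ℕ)+4 : ℕ) : ℤ) := by
          have h01' := h01
          rw [show ((3*(m+1)+2+1 : ℕ) : ℤ) = ((3*m+6 : ℕ) : ℤ) from by push_cast; ring] at h01'
          have := jumpsTo_jmp hins' (by omega) h01'
          exact this
        have h12 := hstep 1
        rw [hf1] at h12
        have hPD := head_jump_dinf t P i hP k₁ h12
        rw [Tf_b t P i _ (m+1) 2 rfl (by omega) (by omega)]
        simp only [blockVal, dif_pos hmn, ht, termVal]
        exact hPD

lemma succ_bound : ∀ j j' : ℤ, 1 ≤ j → j ≤ 3*(n+1) →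
    Succ (prog t i) j j' → 1 ≤ j' ∧ j' ≤ 3*(n+1) := by
  intro j j' h1 h2 hS
  obtain ⟨m, r, hr, hm, rfl⟩ := decomp j h1 h2
  rcases m with - | m
  · interval_cases r
    · have hins : instAt (prog t i) ((3*0+0+1 : ℕ) : ℤ)
          = some (jmp 1 (3*(i : ℕ)+4)) := by
        rw [instAt_b t i _ 0 0 rfl (by omega) (by omega)]; rfl
      have := succ_jmp (s := 1) hins (by omega) hS
      have hi := i.isLt
      omega
    · have hins : instAt (prog t i) ((3*0+1+1 : ℕ) : ℤ)
          = some (jmp 2 3) := by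
        rw [instAt_b t i _ 0 1 rfl (by omega) (by omega)]; rfl
      have := succ_jmp (s := 2) hins (by omega) hS
      omega
    · have hins : instAt (prog t i) ((3*0+2+1 : ℕ) : ℤ)
          = some (jmp 3 2) := by
        rw [instAt_b t i _ 0 2 rfl (by omega) (by omega)]; rfl
      have := succ_jmp (s := 3) hins (by omega) hS
      omega
  · have hmn : m < n := by omega
    have hins := instAt_b t i (3*(m+1)+r+1) (m+1) r rfl hr hm
    rw [show blockIns t i (m+1) r = termIns m (t ⟨m, hmn⟩) r from by
      simp [blockIns, hmn]] at hins
    rcases ht : t ⟨m, hmn⟩ with - | - | ⟨j₁, a, k₁⟩ <;> rw [ht] at hins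
    · interval_cases r
      · unfold Succ at hS; rw [hins] at hS; exact absurd hS (by simp [termIns])
      · have := succ_jmp (s := 3*m+5) (g := 3*m+6)
          (by rw [show ((3*(m+1)+1+1 : ℕ) : ℤ) = ((3*m+5 : ℕ) : ℤ) from by push_cast; ring] at hins; exact hins)
          (by omega) (by rw [show ((3*m+5 : ℕ) : ℤ) = ((3*(m+1)+1+1 : ℕ) : ℤ) from by push_cast; ring]; exact hS)
        omega
      · have := succ_jmp (s := 3*m+6) (g := 3*m+5)
          (by rw [show ((3*(m+1)+2+1 : ℕ) : ℤ) = ((3*m+6 : ℕ) : ℤ) from by push_cast; ring] at hins; exact hins)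
          (by omega) (by rw [show ((3*m+6 : ℕ) : ℤ) = ((3*(m+1)+2+1 : ℕ) : ℤ) from by push_cast; ring]; exact hS)
        omega
    · interval_cases r
      · have := succ_jmp (s := 3*m+4) (g := 3*m+5)
          (by rw [show ((3*(m+1)+0+1 : ℕ) : ℤ) = ((3*m+4 : ℕ) : ℤ) from by push_cast; ring] at hins; exact hins)
          (by omega) (by rw [show ((3*m+4 : ℕ) : ℤ) = ((3*(m+1)+0+1 : ℕ) : ℤ) from by push_cast; ring]; exact hS)
        omega
      · have := succ_jmp (s := 3*m+5) (g := 3*m+6)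
          (by rw [show ((3*(m+1)+1+1 : ℕ) : ℤ) = ((3*m+5 : ℕ) : ℤ) from by push_cast; ring] at hins; exact hins)
          (by omega) (by rw [show ((3*m+5 : ℕ) : ℤ) = ((3*(m+1)+1+1 : ℕ) : ℤ) from by push_cast; ring]; exact hS)
        omega
      · have := succ_jmp (s := 3*m+6) (g := 3*m+5)
          (by rw [show ((3*(m+1)+2+1 : ℕ) : ℤ) = ((3*m+6 : ℕ) : ℤ) from by push_cast; ring] at hins; exact hins)
          (by omega) (by rw [show ((3*m+6 : ℕ) : ℤ) = ((3*(m+1)+2+1 : ℕ) : ℤ) from by push_cast; ring]; exact hS)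
        omega
    · interval_cases r
      · unfold Succ at hS; rw [hins] at hS
        simp only [termIns] at hS
        push_cast
        omega
      · have := succ_jmp (s := 3*m+5) (g := 3*(j₁ : ℕ)+4)
          (by rw [show ((3*(m+1)+1+1 : ℕ) : ℤ) = ((3*m+5 : ℕ) : ℤ) from by push_cast; ring] at hins; exact hins)
          (by omega) (by rw [show ((3*m+5 : ℕ) : ℤ) = ((3*(m+1)+1+1 : ℕ) : ℤ) from by push_cast; ring]; exact hS)
        have hj := j₁.isLt
        omega
      · have := succ_jmp (s := 3*m+6) (g := 3*(k₁ : ℕ)+4)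
          (by rw [show ((3*(m+1)+2+1 : ℕ) : ℤ) = ((3*m+6 : ℕ) : ℤ) from by push_cast; ring] at hins; exact hins)
          (by omega) (by rw [show ((3*m+6 : ℕ) : ℤ) = ((3*(m+1)+2+1 : ℕ) : ℤ) from by push_cast; ring]; exact hS)
        have hk := k₁.isLt
        omega

end RTRP

/-- Every regular thread (a component `P i` of the solution of a finite
linear recursive specification) can be produced by a `C`-program over the
reduced instruction set `{+/a, /#k, #k\, !}` (e.g. using the encodings
`S ↦ !;/#1;#1\` and `D ↦ /#1;/#1;#1\`). -/
theorem regular_thread_produced_by_reduced_program {A : Type} {n : ℕ}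
    (t : Fin n → LinTerm A n) (P : Fin n → BTAinf A)
    (hP : IsSolution t P) (i : Fin n) :
    ∃ X : List (Instr A), CProgram X ∧ (∀ ins ∈ X, InReducedSet' ins) ∧
      ∃ T : ℤ → BTAinf A, ExtrEqns X T ∧ LoopRule X T ∧ T 1 = P i := by
  refine ⟨RTRP.prog t i, ⟨?_, ?_⟩, ?_, RTRP.Tf t P i, ?_, ?_, ?_⟩
  · -- nonempty
    intro h
    have := congrArg List.length h
    simp [RTRP.prog] at this
  · -- control stays inside the program
    intro j j' h1 h2 hrt
    rw [RTRP.prog_length t i] at h2 ⊢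
    induction hrt with
    | refl => exact ⟨h1, h2⟩
    | tail _ hS ih =>
        obtain ⟨hb1, hb2⟩ := ih
        exact RTRP.succ_bound t i _ _ hb1 hb2 hS
  · -- reduced instruction set
    intro ins hins
    simp only [RTRP.prog, List.mem_map, List.mem_range] at hins
    obtain ⟨p, -, rfl⟩ := hins
    exact RTRP.blockIns_reduced t i _ _
  · exact RTRP.extrAll t P i hP
  · exact RTRP.loopRule t P i hP
  · have := RTRP.Tf_b t P i 1 0 0 (by ring) (by omega) (by omega)
    simpa [RTRP.blockVal] using this
end

section
/- For every k ∈ ℕ there exists n ∈ ℕ⁺ such that no C-expression whose jump instructions all have counter at most k has the a-n-property; consequently, for every k there is a finite BTA thread that is not the thread extraction (from any position) of any expression in C_k. -/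
/-- The embedding of finite threads into `BTA^∞` via approximations. -/
def embed {A : Type} (P : BTA A) : BTAinf A :=
  ⟨fun n => BTA.pi n P, fun n => BTA.pi_pi n P⟩

/-- The finite thread `aⁿ ∘ D`. -/
def aPowD {A : Type} (a : A) : ℕ → BTA A
  | 0 => BTA.D
  | n+1 => BTA.pcc (aPowD a n) a (aPowD a n)

/-- `NRes m P Q`: `Q` is an `m`-residual of `P`. -/
inductive NRes {A : Type} : ℕ → BTAinf A → BTAinf A → Prop
  | zero (P : BTAinf A) : NRes 0 P P
  | left (m : ℕ) (b : A) (P1 P2 Q : BTAinf A) :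
      NRes m P1 Q → NRes (m+1) (pccInf b P1 P2) Q
  | right (m : ℕ) (b : A) (P1 P2 Q : BTAinf A) :
      NRes m P2 Q → NRes (m+1) (pccInf b P1 P2) Q

/-- The `a-n`-property of a thread `P`: `π(n,P) = aⁿ ∘ D` and `P` has
`2ⁿ−1` pairwise distinct `n`-residuals, each of whose first approximation
differs from `a ∘ D`. -/
def HasAN {A : Type} (a : A) (n : ℕ) (P : BTAinf A) : Prop :=
  P.1 n = aPowD a n ∧
  ∃ R : Fin (2^n - 1) → BTAinf A, Function.Injective R ∧
    ∀ m : Fin (2^n - 1),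
      NRes n P (R m) ∧ (R m).1 1 ≠ BTA.pcc BTA.D a BTA.D

/-- A `C`-expression has the `a-n`-property if its thread extraction at some
position has it. -/
def HasANExpr {A : Type} (a : A) (n : ℕ) (X : List (Instr A)) : Prop :=
  ∃ (T : ℤ → BTAinf A) (i : ℤ),
    ExtrEqns X T ∧ LoopRule X T ∧ HasAN a n (T i)

/-- All jump counters occurring in `X` are at most `k` (membership in `C_k`). -/
def JumpBounded {A : Type} (k : ℕ) (X : List (Instr A)) : Prop :=
  ∀ ins ∈ X,
    match ins with
    | Instr.fjump m => (m : ℕ) ≤ k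
    | Instr.bjump m => (m : ℕ) ≤ k
    | _ => True

section CKAux
open BTA
open scoped Classical

variable {A : Type}

lemma pi_comp : ∀ (P : BTA A) (m n : ℕ), m ≤ n → BTA.pi m (BTA.pi n P) = BTA.pi m P := by
  intro P
  induction P with
  | S =>
      intro m n h
      cases m with
      | zero => rfl
      | succ m => cases n with
        | zero => omega
        | succ n => rfl
  | D =>
      intro m n h
      cases m with
      | zero => rfl
      | succ m => cases n with
        | zero => omega
        | succ n => rfl
  | pcc P b Q ihP ihQ =>
      intro m n h
      cases m with
      | zero => rfl
      | succ m => cases n with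
        | zero => omega
        | succ n =>
            simp only [BTA.pi]
            rw [ihP m n (by omega), ihQ m n (by omega)]

lemma val0 (v : BTAinf A) : v.1 0 = BTA.D := by
  rw [← v.2 0]; rfl

lemma pi_self (v : BTAinf A) (m : ℕ) : BTA.pi m (v.1 m) = v.1 m := by
  conv_lhs => rw [← v.2 m]
  rw [pi_comp _ m m le_rfl, v.2 m]

lemma proj_le (v : BTAinf A) : ∀ n m, m ≤ n → BTA.pi m (v.1 n) = v.1 m := by
  intro n
  induction n with
  | zero => intro m hm; have : m = 0 := by omega
            subst this; rw [val0]; rfl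
  | succ n ih =>
      intro m hm
      rcases Nat.eq_or_lt_of_le hm with h | h
      · subst h; exact pi_self v _
      · have hm' : m ≤ n := by omega
        calc BTA.pi m (v.1 (n+1)) = BTA.pi m (BTA.pi n (v.1 (n+1))) :=
              (pi_comp _ m n hm').symm
        _ = BTA.pi m (v.1 n) := by rw [v.2 n]
        _ = v.1 m := ih m hm'

lemma pccInf_val_succ (b : A) (x y : BTAinf A) (n : ℕ) :
    (pccInf b x y).1 (n+1) = BTA.pcc (x.1 n) b (y.1 n) := rfl

lemma pccInf_val1 (b : A) (x y : BTAinf A) :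
    (pccInf b x y).1 1 = BTA.pcc BTA.D b BTA.D := by
  rw [pccInf_val_succ, val0, val0]

lemma pccInf_inj {b b' : A} {x y x' y' : BTAinf A}
    (h : pccInf b x y = pccInf b' x' y') : b = b' ∧ x = x' ∧ y = y' := by
  have hv : ∀ n, (pccInf b x y).1 n = (pccInf b' x' y').1 n := fun n => by rw [h]
  have hb : BTA.pcc (x.1 0) b (y.1 0) = BTA.pcc (x'.1 0) b' (y'.1 0) := hv 1
  refine ⟨by injection hb, Subtype.ext (funext fun n => ?_), Subtype.ext (funext fun n => ?_)⟩
  · have h2 : BTA.pcc (x.1 n) b (y.1 n) = BTA.pcc (x'.1 n) b' (y'.1 n) := hv (n+1)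
    injection h2
  · have h2 : BTA.pcc (x.1 n) b (y.1 n) = BTA.pcc (x'.1 n) b' (y'.1 n) := hv (n+1)
    injection h2

lemma pccInf_ne_Dinf (b : A) (x y : BTAinf A) : pccInf b x y ≠ Dinf A := by
  intro h
  have h1 := congrFun (congrArg Subtype.val h) 1
  rw [pccInf_val1] at h1
  cases h1

lemma pccInf_ne_Sinf (b : A) (x y : BTAinf A) : pccInf b x y ≠ Sinf A := by
  intro h
  have h1 := congrFun (congrArg Subtype.val h) 1
  rw [pccInf_val1] at h1
  cases h1

lemma Sinf_ne_Dinf : Sinf A ≠ Dinf A := by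
  intro h
  have h1 := congrFun (congrArg Subtype.val h) 1
  cases h1

/-- left component of a `BTA` term. -/
def getL : BTA A → BTA A
  | .pcc P _ _ => P
  | _ => .D

/-- right component of a `BTA` term. -/
def getR : BTA A → BTA A
  | .pcc _ _ Q => Q
  | _ => .D

lemma shape_at {v : BTAinf A} {b : A} (h : v.1 1 = BTA.pcc BTA.D b BTA.D) (n : ℕ) :
    ∃ s t, v.1 (n+1) = BTA.pcc s b t := by
  have h1 : BTA.pi 1 (v.1 (n+1)) = v.1 1 := proj_le v (n+1) 1 (by omega)
  rcases hv : v.1 (n+1) with _ | _ | ⟨s, b', t⟩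
  · rw [hv] at h1; rw [h] at h1; exact absurd h1 (by intro hh; cases hh)
  · rw [hv] at h1; rw [h] at h1; exact absurd h1 (by intro hh; cases hh)
  · rw [hv] at h1; rw [h] at h1
    have : BTA.pcc (BTA.pi 0 s) b' (BTA.pi 0 t) = BTA.pcc BTA.D b BTA.D := h1
    have hb : b' = b := by injection this
    exact ⟨s, t, by rw [hb]⟩

/-- the left thread of a `BTAinf` whose shape is a postconditional. -/
noncomputable def leftD (v : BTAinf A) : BTAinf A :=
  if h : ∃ b : A, v.1 1 = BTA.pcc BTA.D b BTA.D then
    ⟨fun n => getL (v.1 (n+1)), by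
      obtain ⟨b, hb⟩ := h
      intro n
      obtain ⟨s, t, hst⟩ := shape_at hb (n+1)
      have h2 : v.1 (n+1) = BTA.pcc (BTA.pi n s) b (BTA.pi n t) := by
        rw [← v.2 (n+1), hst]; rfl
      show BTA.pi n (getL (v.1 (n+1+1))) = getL (v.1 (n+1))
      rw [hst, h2]; rfl⟩
  else Dinf A

/-- the right thread of a `BTAinf` whose shape is a postconditional. -/
noncomputable def rightD (v : BTAinf A) : BTAinf A :=
  if h : ∃ b : A, v.1 1 = BTA.pcc BTA.D b BTA.D then
    ⟨fun n => getR (v.1 (n+1)), by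
      obtain ⟨b, hb⟩ := h
      intro n
      obtain ⟨s, t, hst⟩ := shape_at hb (n+1)
      have h2 : v.1 (n+1) = BTA.pcc (BTA.pi n s) b (BTA.pi n t) := by
        rw [← v.2 (n+1), hst]; rfl
      show BTA.pi n (getR (v.1 (n+1+1))) = getR (v.1 (n+1))
      rw [hst, h2]; rfl⟩
  else Dinf A

lemma leftD_val {v : BTAinf A} {b : A} (h : v.1 1 = BTA.pcc BTA.D b BTA.D) (n : ℕ) :
    (leftD v).1 n = getL (v.1 (n+1)) := by
  rw [leftD]; erw [dif_pos ⟨b, h⟩]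

lemma rightD_val {v : BTAinf A} {b : A} (h : v.1 1 = BTA.pcc BTA.D b BTA.D) (n : ℕ) :
    (rightD v).1 n = getR (v.1 (n+1)) := by
  rw [rightD]; erw [dif_pos ⟨b, h⟩]

lemma pcc_decomp {v : BTAinf A} {b : A} (h : v.1 1 = BTA.pcc BTA.D b BTA.D) :
    v = pccInf b (leftD v) (rightD v) := by
  refine Subtype.ext (funext fun n => ?_)
  cases n with
  | zero => rw [val0]; rfl
  | succ n =>
      obtain ⟨s, t, hst⟩ := shape_at h n
      rw [pccInf_val_succ, leftD_val h, rightD_val h, hst]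
      rfl

lemma embed_pcc (P Q : BTA A) (b : A) :
    embed (BTA.pcc P b Q) = pccInf b (embed P) (embed Q) :=
  Subtype.ext (funext fun n => by cases n <;> rfl)

/-- depth of a finite thread. -/
def dep : BTA A → ℕ
  | .S => 0
  | .D => 0
  | .pcc P _ Q => max (dep P) (dep Q) + 1

lemma pi_stable : ∀ (P : BTA A) (n : ℕ), dep P < n → BTA.pi n P = P := by
  intro P
  induction P with
  | S => intro n h; cases n with
    | zero => omega
    | succ n => rfl
  | D => intro n h; cases n with
    | zero => omega
    | succ n => rfl
  | pcc P b Q ihP ihQ =>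
      intro n h
      cases n with
      | zero => omega
      | succ n =>
          have h1 : dep P < n := by simp [dep] at h; omega
          have h2 : dep Q < n := by simp [dep] at h; omega
          simp only [BTA.pi]
          rw [ihP n h1, ihQ n h2]

lemma embed_inj : Function.Injective (embed (A := A)) := by
  intro P Q h
  have h1 : ∀ n, BTA.pi n P = BTA.pi n Q := fun n => congrFun (congrArg Subtype.val h) n
  have hn : dep P < max (dep P) (dep Q) + 1 := by omega
  have hn' : dep Q < max (dep P) (dep Q) + 1 := by omega
  have h2 := h1 (max (dep P) (dep Q) + 1)
  rwa [pi_stable P _ hn, pi_stable Q _ hn'] at h2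

end CKAux
section Comb
open List

lemma mem_of_head?' {α : Type _} {l : List α} {a : α} (h : l.head? = some a) : a ∈ l := by
  cases l with
  | nil => simp at h
  | cons b t => simp at h; subst h; exact List.mem_cons_self

lemma mem_of_getLast?' {α : Type _} : ∀ {l : List α} {a : α}, l.getLast? = some a → a ∈ l := by
  intro l
  induction l with
  | nil => intro a h; simp at h
  | cons b t ih =>
      intro a h
      cases t with
      | nil => simp at h; subst h; exact List.mem_cons_self
      | cons c t' =>
          rw [List.getLast?_cons_cons] at h
          exact List.mem_cons_of_mem _ (ih h)

lemma concat_injEq {α : Type _} {u v : List α} {x y : α} (h : u ++ [x] = v ++ [y]) :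
    u = v ∧ x = y := by
  have hlen : u.length = v.length := by
    have := congrArg List.length h
    simp at this; omega
  have h2 := List.append_inj h hlen
  refine ⟨h2.1, ?_⟩
  have := h2.2
  simpa using this

/-- adjacent pairs of a list. -/
def zp (l : List ℤ) : List (ℤ × ℤ)  := l.zip l.tail

/-- the pair `p` straddles the cut `c`. -/
def str (c : ℤ) (p : ℤ × ℤ) : Prop := (p.1 ≤ c ∧ c < p.2) ∨ (p.2 ≤ c ∧ c < p.1)

/-- interior of a list (drop first and last elements). -/
def innerL (l : List ℤ) : List ℤ := (l.drop 1).dropLast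

/-- the route `l` crosses the cut `c`. -/
def Crossing (c : ℤ) (l : List ℤ) : Prop := ∃ p ∈ zp l, str c p

lemma str_swap {c : ℤ} {z z' : ℤ} (h : str c (z, z')) : str c (z', z) := by
  rcases h with h | h
  · exact Or.inr h
  · exact Or.inl h

lemma chain'_of_zp {R : ℤ → ℤ → Prop} :
    ∀ (l : List ℤ), Chain' R l → ∀ p ∈ zp l, R p.1 p.2 := by
  intro l
  induction l with
  | nil => intro _ p hp; simp [zp] at hp
  | cons a t ih =>
      intro hc p hp
      cases t with
      | nil => simp [zp] at hp
      | cons b t' =>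
          unfold List.Chain' at hc
          rw [List.isChain_cons_cons] at hc
          have h2 : p = (a, b) ∨ p ∈ zp (b :: t') := by
            have : zp (a :: b :: t') = (a, b) :: zp (b :: t') := rfl
            rw [this] at hp
            exact List.mem_cons.1 hp
          rcases h2 with rfl | hp'
          · exact hc.1
          · exact ih hc.2 p hp'

lemma mem_of_zp {p : ℤ × ℤ} {l : List ℤ} (h : p ∈ zp l) : p.1 ∈ l ∧ p.2 ∈ l := by
  obtain ⟨p1, p2⟩ := p
  have h2 := List.of_mem_zip h
  exact ⟨h2.1, List.mem_of_mem_tail h2.2⟩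

lemma zp_chain : ∀ (l : List ℤ), Chain' (fun z z' => (z, z') ∈ zp l) l := by
  intro l
  induction l with
  | nil => exact List.isChain_nil
  | cons a t ih =>
      cases t with
      | nil => exact List.isChain_singleton _
      | cons b t' =>
          unfold List.Chain'
          rw [List.isChain_cons_cons]
          constructor
          · show (a, b) ∈ zp (a :: b :: t')
            have : zp (a :: b :: t') = (a, b) :: zp (b :: t') := rfl
            rw [this]; exact List.mem_cons_self
          · refine List.IsChain.imp ?_ ih
            intro z z' hz
            have : zp (a :: b :: t') = (a, b) :: zp (b :: t') := rfl
            rw [this]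
            exact List.mem_cons_of_mem _ hz

lemma mem_last_or_dropLast {α : Type _} : ∀ (l : List α) (z : α), z ∈ l →
    z ∈ l.dropLast ∨ l.getLast? = some z := by
  intro l
  induction l with
  | nil => simp
  | cons a t ih =>
      intro z hz
      cases t with
      | nil =>
          simp at hz; subst hz; right; rfl
      | cons b t' =>
          rcases List.mem_cons.1 hz with rfl | hzt
          · left; rw [List.dropLast_cons₂]; exact List.mem_cons_self
          · rcases ih z hzt with h | h
            · left; rw [List.dropLast_cons₂]; exact List.mem_cons_of_mem _ h
            · right; rw [List.getLast?_cons_cons]; exact h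

lemma mem_decomp {l : List ℤ} {z : ℤ} (hz : z ∈ l) :
    l.head? = some z ∨ z ∈ innerL l ∨ l.getLast? = some z := by
  cases l with
  | nil => simp at hz
  | cons a t =>
      rcases List.mem_cons.1 hz with rfl | hzt
      · left; rfl
      · rcases mem_last_or_dropLast t z hzt with h | h
        · right; left
          show z ∈ ((a :: t).drop 1).dropLast
          simpa using h
        · right; right
          have ht : t ≠ [] := by rintro rfl; simp at hzt
          cases t with
          | nil => simp at hzt
          | cons b t' => rw [List.getLast?_cons_cons]; exact h

lemma ivt {R : ℤ → ℤ → Prop} (c : ℤ) :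
    ∀ (l : List ℤ), Chain' R l → ∀ x ∈ l, ∀ y ∈ l, x ≤ c → c < y →
      ∃ z z', R z z' ∧ str c (z, z') := by
  intro l
  induction l with
  | nil => intro _ x hx; simp at hx
  | cons a t ih =>
      intro hc x hx y hy hxc hcy
      rcases List.mem_cons.1 hx with rfl | hxt
      · rcases List.mem_cons.1 hy with rfl | hyt
        · omega
        · cases t with
          | nil => simp at hyt
          | cons b t' =>
              have hc' := List.isChain_cons_cons.1 hc
              by_cases hb : c < b
              · exact ⟨x, b, hc'.1, Or.inl ⟨hxc, hb⟩⟩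
              · exact ih hc'.2 b (List.mem_cons_self) y hyt (by omega) hcy
      · rcases List.mem_cons.1 hy with rfl | hyt
        · cases t with
          | nil => simp at hxt
          | cons b t' =>
              have hc' := List.isChain_cons_cons.1 hc
              by_cases hb : b ≤ c
              · exact ⟨y, b, hc'.1, Or.inr ⟨hb, hcy⟩⟩
              · exact ih hc'.2 x hxt b (List.mem_cons_self) hxc (by omega)
        · cases t with
          | nil => simp at hxt
          | cons b t' => exact ih (List.isChain_cons_cons.1 hc).2 x hxt y hyt hxc hcy

/-- An embedded (subdivided) complete binary tree of depth `h` in `ℤ`,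
with routes whose steps are bounded by `K`. -/
structure Emb (K h : ℕ) where
  pos : List Bool → ℤ
  pth : List Bool → Bool → List ℤ
  inj : ∀ u v : List Bool, u.length ≤ h → v.length ≤ h → pos u = pos v → u = v
  phead : ∀ u x, u.length < h → (pth u x).head? = some (pos u)
  plast : ∀ u x, u.length < h → (pth u x).getLast? = some (pos (u ++ [x]))
  pchain : ∀ u x, u.length < h → List.Chain' (fun z z' => (z' - z).natAbs ≤ K) (pth u x)
  pinner : ∀ u x, u.length < h → ∀ z ∈ innerL (pth u x), ∀ v : List Bool,
    v.length ≤ h → z ≠ pos v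
  pdisj : ∀ u x u' x', u.length < h → u'.length < h →
    ∀ z, z ∈ innerL (pth u x) → z ∈ innerL (pth u' x') → u = u' ∧ x = x'

namespace Emb

variable {K h : ℕ}

lemma pth_ne_nil (E : Emb K h) (u : List Bool) (x : Bool) (hu : u.length < h) :
    E.pth u x ≠ [] := by
  intro h0
  have := E.phead u x hu
  rw [h0] at this
  simp at this

lemma upper (E : Emb K h) (c : ℤ) (S : Finset (List Bool × Bool))
    (hS : ∀ e ∈ S, e.1.length < h ∧ Crossing c (E.pth e.1 e.2)) :
    S.card ≤ K * 4 := by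
  classical
  have key : ∀ e : List Bool × Bool, e ∈ S →
      ∃ z : ℤ, z ∈ Finset.Icc (c - K + 1) c ∧ z ∈ E.pth e.1 e.2 := by
    intro e he
    obtain ⟨hlen, p, hp, hstr⟩ := hS e he
    have hK' : (p.2 - p.1).natAbs ≤ K := chain'_of_zp _ (E.pchain _ _ hlen) p hp
    have hmem := mem_of_zp hp
    refine ⟨min p.1 p.2, ?_, ?_⟩
    · rw [Finset.mem_Icc]
      rcases hstr with ⟨h1, h2⟩ | ⟨h1, h2⟩ <;> omega
    · rcases le_total p.1 p.2 with hle | hle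
      · rw [min_eq_left hle]; exact hmem.1
      · rw [min_eq_right hle]; exact hmem.2
  choose! zf hzW hzmem using key
  set tag : (List Bool × Bool) → ℕ := fun e =>
    if zf e ∈ innerL (E.pth e.1 e.2) then 0
    else if zf e = E.pos e.1 then (if e.2 then 1 else 2) else 3 with htag
  have hcard : (Finset.Icc (c - K + 1) c ×ˢ Finset.range 4).card = K * 4 := by
    rw [Finset.card_product, Int.card_Icc, Finset.card_range]
    omega
  rw [← hcard]
  apply Finset.card_le_card_of_injOn (fun e => (zf e, tag e))
  · intro e he
    dsimp only
    rw [Finset.mem_coe, Finset.mem_product]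
    refine ⟨hzW e he, ?_⟩
    rw [Finset.mem_range, htag]
    dsimp only
    split_ifs <;> omega
  · intro e he e' he' heq
    dsimp only at heq
    simp only [Prod.mk.injEq] at heq
    obtain ⟨hz, ht⟩ := heq
    have hle := (hS e he).1
    have hle' := (hS e' he').1
    by_cases h1 : zf e ∈ innerL (E.pth e.1 e.2)
    · by_cases h1' : zf e' ∈ innerL (E.pth e'.1 e'.2)
      · rw [hz] at h1
        have := E.pdisj e.1 e.2 e'.1 e'.2 hle hle' (zf e') h1 h1'
        exact Prod.ext this.1 this.2
      · exfalso
        rw [htag] at ht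
        simp only [if_pos h1, if_neg h1'] at ht
        split_ifs at ht <;> omega
    · by_cases h1' : zf e' ∈ innerL (E.pth e'.1 e'.2)
      · exfalso
        rw [htag] at ht
        simp only [if_neg h1, if_pos h1'] at ht
        split_ifs at ht <;> omega
      · rw [htag] at ht
        simp only [if_neg h1, if_neg h1'] at ht
        by_cases h2 : zf e = E.pos e.1
        · by_cases h2' : zf e' = E.pos e'.1
          · have hu : e.1 = e'.1 := by
              apply E.inj _ _ (le_of_lt hle) (le_of_lt hle')
              rw [← h2, ← h2', hz]
            simp only [if_pos h2, if_pos h2'] at ht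
            have hx : e.2 = e'.2 := by
              split_ifs at ht <;> simp_all
            exact Prod.ext hu hx
          · exfalso
            simp only [if_pos h2, if_neg h2'] at ht
            split_ifs at ht <;> omega
        · by_cases h2' : zf e' = E.pos e'.1
          · exfalso
            simp only [if_neg h2, if_pos h2'] at ht
            split_ifs at ht <;> omega
          · -- both are endpoints of their routes
            have hzl : (E.pth e.1 e.2).getLast? = some (zf e) := by
              rcases mem_decomp (hzmem e he) with hh | hh | hh
              · exfalso; rw [E.phead e.1 e.2 hle] at hh
                exact h2 (by injection hh with h3; exact h3.symm)
              · exact absurd hh h1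
              · exact hh
            have hzl' : (E.pth e'.1 e'.2).getLast? = some (zf e') := by
              rcases mem_decomp (hzmem e' he') with hh | hh | hh
              · exfalso; rw [E.phead e'.1 e'.2 hle'] at hh
                exact h2' (by injection hh with h3; exact h3.symm)
              · exact absurd hh h1'
              · exact hh
            have hp1 : zf e = E.pos (e.1 ++ [e.2]) := by
              rw [E.plast e.1 e.2 hle] at hzl; injection hzl with h3; exact h3.symm
            have hp2 : zf e' = E.pos (e'.1 ++ [e'.2]) := by
              rw [E.plast e'.1 e'.2 hle'] at hzl'; injection hzl' with h3; exact h3.symm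
            have : e.1 ++ [e.2] = e'.1 ++ [e'.2] := by
              apply E.inj _ _ (by simp; omega) (by simp; omega)
              rw [← hp1, ← hp2, hz]
            obtain ⟨hu, hx⟩ := concat_injEq this
            exact Prod.ext hu hx

end Emb
end Comb
section Comb2
open List

/-- all addresses of length at most `h`. -/
def addrs : ℕ → Finset (List Bool)
  | 0 => {[]}
  | h+1 => insert []
      (((addrs h).image (fun u => u ++ [false])) ∪ ((addrs h).image (fun u => u ++ [true])))

lemma mem_addrs : ∀ (h : ℕ) (u : List Bool), u ∈ addrs h ↔ u.length ≤ h := by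
  intro h
  induction h with
  | zero =>
      intro u
      simp [addrs, List.length_eq_zero_iff]
  | succ h ih =>
      intro u
      constructor
      · intro hu
        rw [addrs] at hu
        rcases Finset.mem_insert.1 hu with rfl | hu
        · simp
        · rcases Finset.mem_union.1 hu with hu | hu <;>
          · obtain ⟨v, hv, rfl⟩ := Finset.mem_image.1 hu
            have := (ih v).1 hv
            simp; omega
      · intro hu
        rw [addrs]
        cases u using List.reverseRecOn with
        | nil => exact Finset.mem_insert_self _ _
        | append_singleton v x =>
            apply Finset.mem_insert_of_mem
            have hv : v ∈ addrs h := (ih v).2 (by simp at hu; omega)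
            cases x
            · exact Finset.mem_union_left _ (Finset.mem_image_of_mem _ hv)
            · exact Finset.mem_union_right _ (Finset.mem_image_of_mem _ hv)

lemma prefix_take_two {w u : List Bool} (hw : w.length = 2) (hp : w <+: u) :
    w = u.take 2 := by
  obtain ⟨t, rfl⟩ := hp
  rw [← hw, List.take_left]

lemma pick2 (p q : List Bool) :
    ∃ w : List Bool, w.length = 2 ∧ w ≠ p ∧ w ≠ q := by
  by_contra hcon
  push_neg at hcon
  have key : ∀ w : List Bool, w.length = 2 → w = p ∨ w = q := by
    intro w hw
    by_cases h : w = p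
    · exact Or.inl h
    · exact Or.inr (hcon w hw h)
  have hsub : ({[false,false],[false,true],[true,false],[true,true]} : Finset (List Bool))
      ⊆ {p, q} := by
    intro w hw
    have hlen : w.length = 2 := by fin_cases hw <;> decide
    rcases key w hlen with h | h <;> simp [h]
  have h4 : ({[false,false],[false,true],[true,false],[true,true]} : Finset (List Bool)).card = 4 := by
    decide
  have h2 : ({p, q} : Finset (List Bool)).card ≤ 2 := by
    apply le_trans (Finset.card_insert_le _ _)
    simp
  have := Finset.card_le_card hsub
  omega

namespace Emb

variable {K h : ℕ}

/-- restriction of an embedded tree to the subtree rooted at `w`. -/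
def sub (E : Emb K h) (w : List Bool) (hw : w.length ≤ h) : Emb K (h - w.length) where
  pos u := E.pos (w ++ u)
  pth u x := E.pth (w ++ u) x
  inj u v hu hv hpos := by
    have := E.inj (w ++ u) (w ++ v) (by simp; omega) (by simp; omega) hpos
    exact List.append_cancel_left this
  phead u x hu := E.phead _ _ (by simp; omega)
  plast u x hu := by
    have := E.plast (w ++ u) x (by simp; omega)
    rw [List.append_assoc] at this
    exact this
  pchain u x hu := E.pchain _ _ (by simp; omega)
  pinner u x hu z hz v hv := E.pinner _ _ (by simp; omega) z hz (w ++ v) (by simp; omega)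
  pdisj u x u' x' hu hu' z h1 h2 := by
    have := E.pdisj _ _ _ _ (by simp; omega) (by simp; omega) z h1 h2
    exact ⟨List.append_cancel_left this.1, this.2⟩

/-- the walk from the root to the node `u`. -/
noncomputable def walkTo (E : Emb K h) (u : List Bool) : List ℤ :=
  if hu : u = [] then [E.pos []]
  else walkTo E u.dropLast ++ E.pth u.dropLast (u.getLast hu)
termination_by u.length
decreasing_by
  rw [List.length_dropLast]
  have := List.length_pos_iff.2 hu
  omega

lemma walkTo_nil (E : Emb K h) : E.walkTo [] = [E.pos []] := by
  rw [walkTo]; simp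

lemma walkTo_concat (E : Emb K h) (u : List Bool) (x : Bool) :
    E.walkTo (u ++ [x]) = E.walkTo u ++ E.pth u x := by
  rw [walkTo]
  have hne : u ++ [x] ≠ [] := by simp
  rw [dif_neg hne, List.dropLast_concat, List.getLast_concat]

lemma walkTo_head (E : Emb K h) (u : List Bool) :
    (E.walkTo u).head? = some (E.pos []) := by
  induction u using List.reverseRecOn with
  | nil => rw [walkTo_nil]; rfl
  | append_singleton v x ih =>
      rw [walkTo_concat, List.head?_append, ih]
      rfl

lemma walkTo_ne_nil (E : Emb K h) (u : List Bool) : E.walkTo u ≠ [] := by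
  intro hc
  have := walkTo_head E u
  rw [hc] at this
  simp at this

lemma walkTo_last (E : Emb K h) (u : List Bool) (hu : u.length ≤ h) :
    (E.walkTo u).getLast? = some (E.pos u) := by
  induction u using List.reverseRecOn with
  | nil => rw [walkTo_nil]; rfl
  | append_singleton v x ih =>
      rw [walkTo_concat, List.getLast?_append,
        E.plast v x (by simp at hu; omega)]
      rfl

/-- the relation on positions given by steps of routes of edges not lying
in the subtree rooted at `w₀`. -/
def Wrel (E : Emb K h) (w₀ : List Bool) (z z' : ℤ) : Prop :=
  z = z' ∨ ∃ p x, p.length < h ∧ ¬ (w₀ <+: p) ∧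
    ((z, z') ∈ zp (E.pth p x) ∨ (z', z) ∈ zp (E.pth p x))

lemma Wrel_symm {E : Emb K h} {w₀ : List Bool} {z z' : ℤ}
    (hw : Wrel E w₀ z z') : Wrel E w₀ z' z := by
  rcases hw with rfl | ⟨p, x, h1, h2, h3 | h3⟩
  · exact Or.inl rfl
  · exact Or.inr ⟨p, x, h1, h2, Or.inr h3⟩
  · exact Or.inr ⟨p, x, h1, h2, Or.inl h3⟩

lemma pth_wchain (E : Emb K h) {w₀ p : List Bool} (x : Bool)
    (hp : p.length < h) (hw : ¬ (w₀ <+: p)) :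
    List.Chain' (Wrel E w₀) (E.pth p x) := by
  refine List.IsChain.imp ?_ (zp_chain (E.pth p x))
  intro z z' hz
  exact Or.inr ⟨p, x, hp, hw, Or.inl hz⟩

lemma walk_chain (E : Emb K h) (w₀ : List Bool) :
    ∀ (u : List Bool), u.length ≤ h → ¬ (w₀ <+: u) →
    List.Chain' (Wrel E w₀) (E.walkTo u) := by
  intro u
  induction u using List.reverseRecOn with
  | nil => intro _ _; rw [walkTo_nil]; exact List.isChain_singleton _
  | append_singleton v x ih =>
      intro hu hw
      rw [walkTo_concat]
      have hv : v.length ≤ h := by simp at hu; omega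
      have hwv : ¬ (w₀ <+: v) := by
        intro hc; exact hw (hc.trans (List.prefix_append v [x]))
      refine List.IsChain.append (ih hv hwv) (pth_wchain E x (by simp at hu; omega) hwv) ?_
      intro z1 hz1 z2 hz2
      rw [walkTo_last E v hv] at hz1
      rw [E.phead v x (by simp at hu; omega)] at hz2
      simp at hz1 hz2
      subst hz1; subst hz2
      exact Or.inl rfl

/-- a position used by some edge route. -/
def UsedG (E : Emb K h) (z : ℤ) : Prop := ∃ u x, u.length < h ∧ z ∈ E.pth u x

theorem lower : ∀ (m : ℕ) {K h : ℕ} (E : Emb K h), 2*m+1 ≤ h →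
    ∃ (c : ℤ) (S : Finset (List Bool × Bool)),
      m ≤ S.card ∧ (∀ e ∈ S, e.1.length < h ∧ Crossing c (E.pth e.1 e.2)) ∧
      (∃ z1, UsedG E z1 ∧ z1 ≤ c) ∧ (∃ z2, UsedG E z2 ∧ c < z2) := by
  intro m
  induction m with
  | zero =>
      intro K h E hh
      have h1 : (1:ℕ) ≤ h := by omega
      set p1 := E.pos [] with hp1
      set p2 := E.pos [true] with hp2
      have hne : p1 ≠ p2 := by
        intro hc
        have := E.inj [] [true] (by simp) (by simp; omega) hc
        simp at this
      have hu1 : UsedG E p1 := ⟨[], true, by simp; omega, mem_of_head?' (E.phead [] true (by simp; omega))⟩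
      have hu2 : UsedG E p2 := ⟨[], true, by simp; omega, mem_of_getLast?' (by
        have := E.plast [] true (by simp; omega)
        simpa using this)⟩
      refine ⟨min p1 p2, ∅, by simp, by simp, ⟨min p1 p2, ?_, le_refl _⟩, ⟨max p1 p2, ?_, by omega⟩⟩
      · rcases le_total p1 p2 with hle | hle
        · rw [min_eq_left hle]; exact hu1
        · rw [min_eq_right hle]; exact hu2
      · rcases le_total p1 p2 with hle | hle
        · rw [max_eq_right hle]; exact hu2
        · rw [max_eq_left hle]; exact hu1
  | succ m ih =>
      intro K h E hh
      classical
      -- the finite set of used positions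
      set edgesF : Finset (List Bool × Bool) :=
        (addrs (h-1)) ×ˢ ({false, true} : Finset Bool) with hedgesF
      set UsedF : Finset ℤ := edgesF.biUnion (fun e => (E.pth e.1 e.2).toFinset) with hUsedF
      have hedge_mem : ∀ (u : List Bool) (x : Bool), u.length < h → (u, x) ∈ edgesF := by
        intro u x hu
        rw [hedgesF, Finset.mem_product]
        constructor
        · show u ∈ addrs (h-1)
          exact (mem_addrs _ _).2 (by omega)
        · show x ∈ ({false, true} : Finset Bool)
          cases x <;> simp
      have hused_mem : ∀ z, UsedG E z → z ∈ UsedF := by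
        rintro z ⟨u, x, hu, hz⟩
        rw [hUsedF]
        exact Finset.mem_biUnion.2 ⟨(u, x), hedge_mem u x hu, List.mem_toFinset.2 hz⟩
      have hne : UsedF.Nonempty := by
        have h0h : ([] : List Bool).length < h := by simp; omega
        exact ⟨E.pos [], hused_mem _ ⟨[], true, h0h, mem_of_head?' (E.phead [] true h0h)⟩⟩
      set zmin := UsedF.min' hne with hzmin
      set zmax := UsedF.max' hne with hzmax
      obtain ⟨em, hem, hzminm⟩ : ∃ e ∈ edgesF, zmin ∈ E.pth e.1 e.2 := by
        have := UsedF.min'_mem hne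
        obtain ⟨e, he, hz⟩ := Finset.mem_biUnion.1 this
        exact ⟨e, he, List.mem_toFinset.1 hz⟩
      obtain ⟨ep, hep, hzmaxm⟩ : ∃ e ∈ edgesF, zmax ∈ E.pth e.1 e.2 := by
        have := UsedF.max'_mem hne
        obtain ⟨e, he, hz⟩ := Finset.mem_biUnion.1 this
        exact ⟨e, he, List.mem_toFinset.1 hz⟩
      have hemlen : em.1.length < h := by
        rw [hedgesF, Finset.mem_product] at hem
        have := (mem_addrs _ _).1 hem.1
        omega
      have heplen : ep.1.length < h := by
        rw [hedgesF, Finset.mem_product] at hep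
        have := (mem_addrs _ _).1 hep.1
        omega
      -- choose a depth-2 subtree avoiding the extremal edges
      obtain ⟨w₀, hw2, hwp, hwq⟩ := pick2 (em.1.take 2) (ep.1.take 2)
      have hwm : ¬ (w₀ <+: em.1) := fun hc => hwp (prefix_take_two hw2 hc)
      have hwq' : ¬ (w₀ <+: ep.1) := fun hc => hwq (prefix_take_two hw2 hc)
      have hw0len : w₀.length ≤ h := by omega
      -- apply the induction hypothesis to the subtree
      obtain ⟨c, S', hcard', hS', ⟨z1, hz1u, hz1c⟩, ⟨z2, hz2u, hz2c⟩⟩ :=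
        ih (E.sub w₀ hw0len) (by rw [hw2]; omega)
      have hsubused : ∀ z, UsedG (E.sub w₀ hw0len) z → UsedG E z := by
        rintro z ⟨u, x, hu, hz⟩
        exact ⟨w₀ ++ u, x, by simp; omega, hz⟩
      -- the big walk from the global minimum to the global maximum
      set wA : List ℤ := E.walkTo em.1 ++ E.pth em.1 em.2 with hwA
      set wB : List ℤ := E.walkTo ep.1 ++ E.pth ep.1 ep.2 with hwB
      have hchainA : List.Chain' (Wrel E w₀) wA := by
        refine List.IsChain.append (walk_chain E w₀ em.1 (le_of_lt hemlen) hwm)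
          (pth_wchain E em.2 hemlen hwm) ?_
        intro x1 hx1 x2 hx2
        rw [walkTo_last E em.1 (le_of_lt hemlen)] at hx1
        rw [E.phead em.1 em.2 hemlen] at hx2
        simp at hx1 hx2; subst hx1; subst hx2
        exact Or.inl rfl
      have hchainB : List.Chain' (Wrel E w₀) wB := by
        refine List.IsChain.append (walk_chain E w₀ ep.1 (le_of_lt heplen) hwq')
          (pth_wchain E ep.2 heplen hwq') ?_
        intro x1 hx1 x2 hx2
        rw [walkTo_last E ep.1 (le_of_lt heplen)] at hx1
        rw [E.phead ep.1 ep.2 heplen] at hx2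
        simp at hx1 hx2; subst hx1; subst hx2
        exact Or.inl rfl
      set big : List ℤ := wA.reverse ++ wB with hbig
      have hchain : List.Chain' (Wrel E w₀) big := by
        refine List.IsChain.append ?_ hchainB ?_
        · rw [List.isChain_reverse]
          exact List.IsChain.imp (fun z z' hz => Wrel_symm hz) hchainA
        · intro x1 hx1 x2 hx2
          rw [List.getLast?_reverse] at hx1
          have hhA : wA.head? = some (E.pos []) := by
            rw [hwA, List.head?_append, walkTo_head]; rfl
          have hhB : wB.head? = some (E.pos []) := by
            rw [hwB, List.head?_append, walkTo_head]; rfl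
          rw [hhA] at hx1; rw [hhB] at hx2
          simp at hx1 hx2; subst hx1; subst hx2
          exact Or.inl rfl
      -- global extremes versus the witness cut
      have hz1g : z1 ∈ UsedF := hused_mem _ (hsubused _ hz1u)
      have hz2g : z2 ∈ UsedF := hused_mem _ (hsubused _ hz2u)
      have hminc : zmin ≤ c := le_trans (UsedF.min'_le _ hz1g) hz1c
      have hmaxc : c < zmax := lt_of_lt_of_le hz2c (UsedF.le_max' _ hz2g)
      have hzmin_big : zmin ∈ big := by
        rw [hbig]
        exact List.mem_append_left _ (List.mem_reverse.2
          (List.mem_append_right _ hzminm))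
      have hzmax_big : zmax ∈ big := by
        rw [hbig]
        exact List.mem_append_right _ (List.mem_append_right _ hzmaxm)
      obtain ⟨z, z', hrel, hstr⟩ := ivt c big hchain zmin hzmin_big zmax hzmax_big hminc hmaxc
      have hzz' : z ≠ z' := by
        rcases hstr with ⟨ha, hb⟩ | ⟨ha, hb⟩ <;> omega
      obtain ⟨p, x, hplen, hpw, hpair⟩ : ∃ p x, p.length < h ∧ ¬ (w₀ <+: p) ∧
          ((z, z') ∈ zp (E.pth p x) ∨ (z', z) ∈ zp (E.pth p x)) := by
        rcases hrel with rfl | hrel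
        · exact absurd rfl hzz'
        · exact hrel
      have hcross : Crossing c (E.pth p x) := by
        rcases hpair with hp | hp
        · exact ⟨(z, z'), hp, hstr⟩
        · exact ⟨(z', z), hp, str_swap hstr⟩
      -- assemble the new edge set
      set S : Finset (List Bool × Bool) :=
        insert (p, x) (S'.image (fun e => (w₀ ++ e.1, e.2))) with hS
      have himg_inj : Function.Injective (fun e : List Bool × Bool => (w₀ ++ e.1, e.2)) := by
        intro e e' he
        simp only [Prod.mk.injEq] at he
        exact Prod.ext (List.append_cancel_left he.1) he.2
      have hpx_not : (p, x) ∉ S'.image (fun e => (w₀ ++ e.1, e.2)) := by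
        intro hc
        obtain ⟨e, -, heq⟩ := Finset.mem_image.1 hc
        apply hpw
        have : w₀ ++ e.1 = p := by
          have := congrArg Prod.fst heq
          simpa using this
        rw [← this]
        exact List.prefix_append _ _
      refine ⟨c, S, ?_, ?_, ⟨zmin, ⟨em.1, em.2, hemlen, hzminm⟩, hminc⟩,
        ⟨zmax, ⟨ep.1, ep.2, heplen, hzmaxm⟩, hmaxc⟩⟩
      · rw [hS, Finset.card_insert_of_notMem hpx_not,
          Finset.card_image_of_injective _ himg_inj]
        omega
      · intro e he
        rw [hS] at he
        rcases Finset.mem_insert.1 he with rfl | he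
        · exact ⟨hplen, hcross⟩
        · obtain ⟨e', he', rfl⟩ := Finset.mem_image.1 he
          obtain ⟨hlen', hcross'⟩ := hS' e' he'
          constructor
          · simp only [List.length_append]
            rw [hw2] at *
            omega
          · exact hcross'

theorem no_emb {K : ℕ} (E : Emb K (2*(K*4+1)+1)) : False := by
  obtain ⟨c, S, hcard, hS, -, -⟩ := lower (K*4+1) E (le_refl _)
  have := E.upper c S hS
  omega

end Emb
end Comb2
section Extraction
open BTA
open scoped Classical

variable {A : Type}

lemma getLast?_cons_of_ne_nil {α : Type _} {a : α} {l : List α} (hl : l ≠ []) :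
    (a :: l).getLast? = l.getLast? := by
  cases l with
  | nil => exact absurd rfl hl
  | cons b t => rw [List.getLast?_cons_cons]

/-- is the instruction a jump? -/
def isJump : Option (Instr A) → Prop
  | some (Instr.fjump _) => True
  | some (Instr.bjump _) => True
  | _ => False

lemma instAt_mem {X : List (Instr A)} {p : ℤ} {ins : Instr A}
    (h : instAt X p = some ins) : ins ∈ X := by
  rw [instAt] at h
  split at h
  · exact List.mem_of_getElem? h
  · simp at h

lemma jump_bound_f {k : ℕ} {X : List (Instr A)} (hb : JumpBounded k X) {p : ℤ} {m : ℕ+}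
    (h : instAt X p = some (Instr.fjump m)) : (m : ℕ) ≤ k := by
  have := hb _ (instAt_mem h)
  simpa using this

lemma jump_bound_b {k : ℕ} {X : List (Instr A)} (hb : JumpBounded k X) {p : ℤ} {m : ℕ+}
    (h : instAt X p = some (Instr.bjump m)) : (m : ℕ) ≤ k := by
  have := hb _ (instAt_mem h)
  simpa using this

/-- one jump step. -/
def stepFn (X : List (Instr A)) (j : ℤ) : ℤ :=
  match instAt X j with
  | some (Instr.fjump k) => j + ((k : ℕ) : ℤ)
  | some (Instr.bjump k) => j - ((k : ℕ) : ℤ)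
  | _ => j

lemma jumpsTo_stepFn {X : List (Instr A)} {j : ℤ} (hj : isJump (instAt X j)) :
    JumpsTo X j (stepFn X j) := by
  rcases hins : instAt X j with - | ins
  · rw [hins] at hj; exact hj.elim
  · cases ins <;> rw [hins] at hj <;> try exact hj.elim
    · exact Or.inl ⟨_, hins, by rw [stepFn, hins]⟩
    · exact Or.inr ⟨_, hins, by rw [stepFn, hins]⟩

lemma T_stepFn {X : List (Instr A)} {T : ℤ → BTAinf A} (hT : ExtrEqns X T) {j : ℤ}
    (hj : isJump (instAt X j)) : T (stepFn X j) = T j := by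
  have h := hT j
  rcases hins : instAt X j with - | ins
  · rw [hins] at hj; exact hj.elim
  · cases ins <;> rw [hins] at hj <;> try exact hj.elim
    · rw [hins] at h
      rw [stepFn, hins]
      exact h.symm
    · rw [hins] at h
      rw [stepFn, hins]
      exact h.symm

lemma stop_ex {X : List (Instr A)} {T : ℤ → BTAinf A} (hT : ExtrEqns X T)
    (hL : LoopRule X T) {j : ℤ} (hj : T j ≠ Dinf A) :
    ∃ m, ¬ isJump (instAt X ((stepFn X)^[m] j)) := by
  by_contra hcon
  push_neg at hcon
  apply hj
  apply hL
  refine ⟨fun m => (stepFn X)^[m] j, rfl, fun m => ?_⟩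
  show JumpsTo X ((stepFn X)^[m] j) ((stepFn X)^[m+1] j)
  rw [Function.iterate_succ_apply']
  exact jumpsTo_stepFn (hcon m)

/-- number of jump steps before reaching a non-jump instruction. -/
noncomputable def stopT (X : List (Instr A)) (j : ℤ) : ℕ :=
  if hj : ∃ m, ¬ isJump (instAt X ((stepFn X)^[m] j)) then Nat.find hj else 0

/-- end position of the jump chain from `j`. -/
noncomputable def resEnd (X : List (Instr A)) (j : ℤ) : ℤ := (stepFn X)^[stopT X j] j

/-- the jump chain from `j`. -/
noncomputable def resList (X : List (Instr A)) (j : ℤ) : List ℤ :=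
  (List.range (stopT X j + 1)).map (fun t => (stepFn X)^[t] j)

variable {X : List (Instr A)} {T : ℤ → BTAinf A}

lemma resEnd_nonjump (hT : ExtrEqns X T) (hL : LoopRule X T) {j : ℤ}
    (hj : T j ≠ Dinf A) : ¬ isJump (instAt X (resEnd X j)) := by
  have hex := stop_ex hT hL hj
  rw [resEnd, stopT, dif_pos hex]
  exact Nat.find_spec hex

lemma stopT_min (hT : ExtrEqns X T) (hL : LoopRule X T) {j : ℤ}
    (hj : T j ≠ Dinf A) {t : ℕ} (ht : t < stopT X j) :
    isJump (instAt X ((stepFn X)^[t] j)) := by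
  have hex := stop_ex hT hL hj
  rw [stopT, dif_pos hex] at ht
  by_contra hcon
  have := Nat.find_min' hex hcon
  omega

lemma T_iter (hT : ExtrEqns X T) (hL : LoopRule X T) {j : ℤ}
    (hj : T j ≠ Dinf A) : ∀ t, t ≤ stopT X j → T ((stepFn X)^[t] j) = T j := by
  intro t
  induction t with
  | zero => intro _; rfl
  | succ t ih =>
      intro ht
      rw [Function.iterate_succ_apply']
      rw [T_stepFn hT (stopT_min hT hL hj (by omega))]
      exact ih (by omega)

lemma T_resEnd (hT : ExtrEqns X T) (hL : LoopRule X T) {j : ℤ}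
    (hj : T j ≠ Dinf A) : T (resEnd X j) = T j :=
  T_iter hT hL hj _ le_rfl

lemma resList_head (j : ℤ) : (resList X j).head? = some j := by
  rw [resList, List.range_succ_eq_map]
  simp

lemma resList_ne_nil (j : ℤ) : resList X j ≠ [] := by
  intro hc
  have := resList_head (X := X) j
  rw [hc] at this
  simp at this

lemma resList_last (j : ℤ) : (resList X j).getLast? = some (resEnd X j) := by
  rw [resList, List.range_succ, List.map_append]
  simp [resEnd]

lemma resList_dropLast (j : ℤ) :
    (resList X j).dropLast = (List.range (stopT X j)).map (fun t => (stepFn X)^[t] j) := by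
  rw [resList, List.range_succ, List.map_append]
  exact List.dropLast_concat

lemma resList_chain {k K : ℕ} (hb : JumpBounded k X) (hT : ExtrEqns X T)
    (hL : LoopRule X T) (hkK : k ≤ K) {j : ℤ} (hj : T j ≠ Dinf A) :
    List.Chain' (fun z z' => (z' - z).natAbs ≤ K) (resList X j) := by
  rw [resList]
  unfold List.Chain'
  rw [List.isChain_map]
  have : stopT X j + 1 = (stopT X j).succ := rfl
  rw [this, List.isChain_range_succ]
  intro t ht
  have hjump := stopT_min hT hL hj ht
  rw [Function.iterate_succ_apply']
  set z := (stepFn X)^[t] j with hz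
  rcases hins : instAt X z with - | ins
  · rw [hins] at hjump; exact hjump.elim
  · cases ins <;> rw [hins] at hjump <;> try exact hjump.elim
    · rename_i m
      have hm := jump_bound_f hb hins
      simp only [stepFn, hins]
      have : ((m : ℕ) : ℤ) ≥ 0 := Int.natCast_nonneg _
      omega
    · rename_i m
      have hm := jump_bound_b hb hins
      simp only [stepFn, hins]
      have : ((m : ℕ) : ℤ) ≥ 0 := Int.natCast_nonneg _
      omega

lemma stopT_shift (hT : ExtrEqns X T) (hL : LoopRule X T) {j : ℤ}
    (hj : T j ≠ Dinf A) {t : ℕ} (ht : t ≤ stopT X j) :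
    stopT X ((stepFn X)^[t] j) = stopT X j - t ∧
      resEnd X ((stepFn X)^[t] j) = resEnd X j := by
  have hex := stop_ex hT hL hj
  set z := (stepFn X)^[t] j with hzdef
  have hiter : ∀ s : ℕ, (stepFn X)^[s] z = (stepFn X)^[s + t] j := by
    intro s
    rw [hzdef, ← Function.iterate_add_apply]
  have hstopj : stopT X j = Nat.find hex := by rw [stopT, dif_pos hex]
  have hexz : ∃ m, ¬ isJump (instAt X ((stepFn X)^[m] z)) := by
    refine ⟨stopT X j - t, ?_⟩
    rw [hiter]
    have harith : stopT X j - t + t = stopT X j := by omega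
    rw [harith]
    exact resEnd_nonjump hT hL hj
  have hstopz : stopT X z = Nat.find hexz := by rw [stopT, dif_pos hexz]
  have h1 : stopT X z ≤ stopT X j - t := by
    rw [hstopz]
    apply Nat.find_le
    rw [hiter]
    have harith : stopT X j - t + t = stopT X j := by omega
    rw [harith]
    exact resEnd_nonjump hT hL hj
  have h2 : stopT X j ≤ stopT X z + t := by
    rw [hstopj]
    apply Nat.find_le
    rw [← hiter]
    have := Nat.find_spec hexz
    rw [← hstopz] at this
    exact this
  have heq : stopT X z = stopT X j - t := by omega
  refine ⟨heq, ?_⟩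
  rw [resEnd, heq, hiter, resEnd]
  congr 1
  omega

end Extraction
section Main
open BTA

variable {A : Type}

/-- the entry position of the branch `x` after the instruction at `p`. -/
def entry (X : List (Instr A)) (p : ℤ) (x : Bool) : ℤ :=
  match instAt X p with
  | some (Instr.fbasic _) => p+1
  | some (Instr.fptest _) => cond x (p+2) (p+1)
  | some (Instr.fntest _) => cond x (p+1) (p+2)
  | some (Instr.bbasic _) => p-1
  | some (Instr.bptest _) => cond x (p-2) (p-1)
  | some (Instr.bntest _) => cond x (p-1) (p-2)
  | _ => p

variable {X : List (Instr A)} {T : ℤ → BTAinf A}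

lemma entry_step (hT : ExtrEqns X T) {p : ℤ} {b : A} {v1 v2 : BTAinf A}
    (hnj : ¬ isJump (instAt X p)) (hp : T p = pccInf b v1 v2) :
    T (entry X p false) = v1 ∧ T (entry X p true) = v2 ∧
      (∀ x, (entry X p x - p).natAbs ≤ 2) := by
  have h := hT p
  rcases hins : instAt X p with - | ins
  · rw [hins] at h
    exact absurd (hp.symm.trans h) (pccInf_ne_Dinf b v1 v2)
  · cases ins with
    | fbasic a' =>
        rw [hins] at h
        have hinj := pccInf_inj (hp.symm.trans h)
        simp only [entry, hins, Bool.cond_false, Bool.cond_true]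
        exact ⟨hinj.2.1.symm, hinj.2.2.symm, fun x => by cases x <;> simp <;> omega⟩
    | fptest a' =>
        rw [hins] at h
        have hinj := pccInf_inj (hp.symm.trans h)
        simp only [entry, hins, Bool.cond_false, Bool.cond_true]
        exact ⟨hinj.2.1.symm, hinj.2.2.symm, fun x => by cases x <;> simp <;> omega⟩
    | fntest a' =>
        rw [hins] at h
        have hinj := pccInf_inj (hp.symm.trans h)
        simp only [entry, hins, Bool.cond_false, Bool.cond_true]
        exact ⟨hinj.2.1.symm, hinj.2.2.symm, fun x => by cases x <;> simp <;> omega⟩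
    | bbasic a' =>
        rw [hins] at h
        have hinj := pccInf_inj (hp.symm.trans h)
        simp only [entry, hins, Bool.cond_false, Bool.cond_true]
        exact ⟨hinj.2.1.symm, hinj.2.2.symm, fun x => by cases x <;> simp <;> omega⟩
    | bptest a' =>
        rw [hins] at h
        have hinj := pccInf_inj (hp.symm.trans h)
        simp only [entry, hins, Bool.cond_false, Bool.cond_true]
        exact ⟨hinj.2.1.symm, hinj.2.2.symm, fun x => by cases x <;> simp <;> omega⟩
    | bntest a' =>
        rw [hins] at h
        have hinj := pccInf_inj (hp.symm.trans h)
        simp only [entry, hins, Bool.cond_false, Bool.cond_true]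
        exact ⟨hinj.2.1.symm, hinj.2.2.symm, fun x => by cases x <;> simp <;> omega⟩
    | fjump m => rw [hins] at hnj; exact absurd trivial hnj
    | bjump m => rw [hins] at hnj; exact absurd trivial hnj
    | halt =>
        rw [hins] at h
        exact absurd (hp.symm.trans h) (pccInf_ne_Sinf b v1 v2)
    | abort =>
        rw [hins] at h
        exact absurd (hp.symm.trans h) (pccInf_ne_Dinf b v1 v2)

theorem main_no_tree {k K h : ℕ} (hkK : k ≤ K) (h2K : 2 ≤ K)
    (hhK : h = 2*(K*4+1)+1)
    (hb : JumpBounded k X) (hT : ExtrEqns X T) (hL : LoopRule X T)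
    (V : List Bool → BTAinf A) (i0 : ℤ) (hroot : T i0 = V [])
    (hVpcc : ∀ u : List Bool, u.length < h →
      ∃ b, V u = pccInf b (V (u ++ [false])) (V (u ++ [true])))
    (hVD : ∀ u : List Bool, u.length ≤ h → V u ≠ Dinf A)
    (hVinj : ∀ u v : List Bool, u.length ≤ h → v.length ≤ h → V u = V v → u = v) :
    False := by
  classical
  set nodeP : List Bool → ℤ :=
    fun u => u.foldl (fun p x => resEnd X (entry X p x)) (resEnd X i0) with hnodeP
  have hnodeP_concat : ∀ u x, nodeP (u ++ [x]) = resEnd X (entry X (nodeP u) x) := by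
    intro u x
    rw [hnodeP]
    exact List.foldl_concat _ _ _ _
  have Inv : ∀ u : List Bool, u.length ≤ h →
      T (nodeP u) = V u ∧ ¬ isJump (instAt X (nodeP u)) := by
    intro u
    induction u using List.reverseRecOn with
    | nil =>
        intro _
        have hD : T i0 ≠ Dinf A := by rw [hroot]; exact hVD [] (by simp)
        constructor
        · show T (resEnd X i0) = V []
          rw [T_resEnd hT hL hD, hroot]
        · exact resEnd_nonjump hT hL hD
    | append_singleton u x ih =>
        intro hlen
        have hulen : u.length ≤ h := by simp at hlen; omega
        have hul : u.length < h := by simp at hlen; omega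
        obtain ⟨hTu, hnj⟩ := ih hulen
        obtain ⟨b, hpcc⟩ := hVpcc u hul
        have hstep := entry_step hT hnj (hTu.trans hpcc)
        have hx : T (entry X (nodeP u) x) = V (u ++ [x]) := by
          cases x
          · exact hstep.1
          · exact hstep.2.1
        have hD : T (entry X (nodeP u) x) ≠ Dinf A := by
          rw [hx]; exact hVD _ hlen
        rw [hnodeP_concat]
        exact ⟨(T_resEnd hT hL hD).trans hx, resEnd_nonjump hT hL hD⟩
  have hentry : ∀ (u : List Bool) (x : Bool), u.length < h →
      T (entry X (nodeP u) x) = V (u ++ [x]) ∧ T (entry X (nodeP u) x) ≠ Dinf A ∧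
      (entry X (nodeP u) x - nodeP u).natAbs ≤ 2 := by
    intro u x hul
    obtain ⟨hTu, hnj⟩ := Inv u (le_of_lt hul)
    obtain ⟨b, hpcc⟩ := hVpcc u hul
    have hstep := entry_step hT hnj (hTu.trans hpcc)
    have hx : T (entry X (nodeP u) x) = V (u ++ [x]) := by
      cases x
      · exact hstep.1
      · exact hstep.2.1
    refine ⟨hx, by rw [hx]; exact hVD _ (by simp; omega), hstep.2.2 x⟩
  subst hhK
  refine Emb.no_emb (K := K)
    { pos := nodeP
      pth := fun u x => nodeP u :: resList X (entry X (nodeP u) x)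
      inj := ?_
      phead := ?_
      plast := ?_
      pchain := ?_
      pinner := ?_
      pdisj := ?_ }
  · intro u v hu hv heq
    apply hVinj u v hu hv
    rw [← (Inv u hu).1, ← (Inv v hv).1, heq]
  · intro u x hu
    rfl
  · intro u x hu
    show (nodeP u :: resList X (entry X (nodeP u) x)).getLast? = some (nodeP (u ++ [x]))
    rw [getLast?_cons_of_ne_nil (resList_ne_nil _), resList_last, hnodeP_concat]
  · intro u x hu
    unfold List.Chain'
    rw [List.isChain_cons]
    constructor
    · intro y hy
      rw [resList_head] at hy
      simp at hy
      subst hy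
      have := (hentry u x hu).2.2
      omega
    · exact resList_chain hb hT hL hkK (hentry u x hu).2.1
  · intro u x hu z hz v hv
    have hz' : z ∈ (resList X (entry X (nodeP u) x)).dropLast := hz
    rw [resList_dropLast] at hz'
    obtain ⟨t, htr, hzt⟩ := List.mem_map.1 hz'
    have ht : t < stopT X (entry X (nodeP u) x) := List.mem_range.1 htr
    have hjump := stopT_min hT hL (hentry u x hu).2.1 ht
    intro hc
    rw [hzt, hc] at hjump
    exact (Inv v hv).2 hjump
  · intro u x u' x' hu hu' z hz hz'
    have hz1 : z ∈ (resList X (entry X (nodeP u) x)).dropLast := hz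
    have hz2 : z ∈ (resList X (entry X (nodeP u') x')).dropLast := hz'
    rw [resList_dropLast] at hz1 hz2
    obtain ⟨t1, ht1r, hzt1⟩ := List.mem_map.1 hz1
    have ht1 : t1 < stopT X (entry X (nodeP u) x) := List.mem_range.1 ht1r
    obtain ⟨t2, ht2r, hzt2⟩ := List.mem_map.1 hz2
    have ht2 : t2 < stopT X (entry X (nodeP u') x') := List.mem_range.1 ht2r
    have hD1 := (hentry u x hu).2.1
    have hD2 := (hentry u' x' hu').2.1
    have hs1 := (stopT_shift hT hL hD1 (le_of_lt ht1)).2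
    have hs2 := (stopT_shift hT hL hD2 (le_of_lt ht2)).2
    rw [hzt1] at hs1
    rw [hzt2] at hs2
    have hend : nodeP (u ++ [x]) = nodeP (u' ++ [x']) := by
      rw [hnodeP_concat, hnodeP_concat, ← hs1, ← hs2]
    have hVeq : V (u ++ [x]) = V (u' ++ [x']) := by
      rw [← (Inv _ (by simp; omega)).1, ← (Inv _ (by simp; omega)).1, hend]
    have := hVinj _ _ (by simp; omega) (by simp; omega) hVeq
    exact concat_injEq this

end Main
section Part1Prep
open BTA

variable {A : Type}

/-- descend into a thread along an address. -/
noncomputable def desc (P : BTAinf A) (u : List Bool) : BTAinf A :=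
  u.foldl (fun w x => cond x (rightD w) (leftD w)) P

lemma desc_nil (P : BTAinf A) : desc P [] = P := rfl

lemma desc_concat (P : BTAinf A) (u : List Bool) (x : Bool) :
    desc P (u ++ [x]) = cond x (rightD (desc P u)) (leftD (desc P u)) :=
  List.foldl_concat _ _ _ _

lemma desc_append (P : BTAinf A) (u s : List Bool) :
    desc P (u ++ s) = desc (desc P u) s :=
  List.foldl_append

variable (a : A)

lemma shape_step {v : BTAinf A} {m : ℕ} (hv : v.1 (m+1) = aPowD a (m+1)) :
    v.1 1 = BTA.pcc BTA.D a BTA.D ∧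
    (leftD v).1 m = aPowD a m ∧ (rightD v).1 m = aPowD a m ∧
    v = pccInf a (leftD v) (rightD v) := by
  have h1 : v.1 1 = BTA.pcc BTA.D a BTA.D := by
    have hp := proj_le v (m+1) 1 (by omega)
    rw [hv] at hp
    rw [← hp]
    rfl
  refine ⟨h1, ?_, ?_, pcc_decomp h1⟩
  · rw [leftD_val h1, hv]; rfl
  · rw [rightD_val h1, hv]; rfl

lemma Winv {P : BTAinf A} {n : ℕ} (hP : P.1 n = aPowD a n) :
    ∀ u : List Bool, u.length ≤ n →
      (desc P u).1 (n - u.length) = aPowD a (n - u.length) := by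
  intro u
  induction u using List.reverseRecOn with
  | nil => intro _; simpa [desc_nil] using hP
  | append_singleton u x ih =>
      intro hlen
      have hu : u.length ≤ n := by simp at hlen; omega
      have hul : u.length < n := by simp at hlen; omega
      have hm : n - u.length = (n - (u.length + 1)) + 1 := by omega
      have ihv := ih hu
      rw [hm] at ihv
      have hs := shape_step a ihv
      have hlen2 : (u ++ [x]).length = u.length + 1 := by simp
      rw [desc_concat, hlen2]
      cases x
      · simpa using hs.2.1
      · simpa using hs.2.2.1

lemma Wpcc {P : BTAinf A} {n : ℕ} (hP : P.1 n = aPowD a n) (u : List Bool)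
    (hu : u.length < n) :
    desc P u = pccInf a (desc P (u ++ [false])) (desc P (u ++ [true])) ∧
    (desc P u).1 1 = BTA.pcc BTA.D a BTA.D := by
  have hule : u.length ≤ n := le_of_lt hu
  have hW := Winv a hP u hule
  have hm : n - u.length = (n - (u.length + 1)) + 1 := by omega
  rw [hm] at hW
  have hs := shape_step a hW
  constructor
  · rw [desc_concat, desc_concat]
    simp only [Bool.cond_false, Bool.cond_true]
    exact hs.2.2.2
  · exact hs.1

lemma NRes_succ_inv {m : ℕ} {b : A} {P1 P2 Q : BTAinf A}
    (h : NRes (m+1) (pccInf b P1 P2) Q) : NRes m P1 Q ∨ NRes m P2 Q := by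
  generalize hv : pccInf b P1 P2 = v at h
  cases h with
  | left m' b' Q1 Q2 Q' hres =>
      left
      rw [(pccInf_inj hv).2.1]
      exact hres
  | right m' b' Q1 Q2 Q' hres =>
      right
      rw [(pccInf_inj hv).2.2]
      exact hres

lemma res_leaf {P : BTAinf A} {n : ℕ} (hP : P.1 n = aPowD a n) :
    ∀ (m : ℕ) (u : List Bool) (Q : BTAinf A), u.length + m = n →
      NRes m (desc P u) Q → ∃ s, s.length = m ∧ Q = desc P (u ++ s) := by
  intro m
  induction m with
  | zero =>
      intro u Q hlen hN
      cases hN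
      exact ⟨[], rfl, by simp⟩
  | succ m ih =>
      intro u Q hlen hN
      have hu : u.length < n := by omega
      have hpcc := (Wpcc a hP u hu).1
      rw [hpcc] at hN
      rcases NRes_succ_inv hN with hres | hres
      · obtain ⟨s, hs1, hs2⟩ := ih (u ++ [false]) Q (by simp; omega) hres
        refine ⟨false :: s, by simp [hs1], ?_⟩
        rw [hs2, List.append_assoc]
        rfl
      · obtain ⟨s, hs1, hs2⟩ := ih (u ++ [true]) Q (by simp; omega) hres
        refine ⟨true :: s, by simp [hs1], ?_⟩
        rw [hs2, List.append_assoc]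
        rfl

end Part1Prep
section Part1
open BTA

variable {A : Type}

lemma stepPos {X : List (Instr A)} {T : ℤ → BTAinf A} (hT : ExtrEqns X T)
    (hL : LoopRule X T) {j : ℤ} {b : A} {v1 v2 : BTAinf A}
    (hj : T j = pccInf b v1 v2) :
    (∃ j1, T j1 = v1) ∧ (∃ j2, T j2 = v2) := by
  have hD : T j ≠ Dinf A := by rw [hj]; exact pccInf_ne_Dinf _ _ _
  have hTp : T (resEnd X j) = pccInf b v1 v2 := by rw [T_resEnd hT hL hD, hj]
  have hnj := resEnd_nonjump hT hL hD
  have hs := entry_step hT hnj hTp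
  exact ⟨⟨_, hs.1⟩, ⟨_, hs.2.1⟩⟩

lemma ofFn_get_cast (u : List Bool) (n : ℕ) (hu : u.length = n) :
    List.ofFn (fun i : Fin n => u.get (Fin.cast hu.symm i)) = u := by
  subst hu
  exact List.ofFn_get u

theorem part1_gen (a : A) {k : ℕ} {X : List (Instr A)} (hb : JumpBounded k X)
    (n : ℕ) (hn : n = 2*((k+2)*4+1)+3) : ¬ HasANExpr a n X := by
  classical
  intro hA
  obtain ⟨T, i, hT, hL, hAN⟩ := hA
  obtain ⟨hP1, R, hRinj, hRprop⟩ := hAN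
  set K := k + 2 with hK
  set h := 2*(K*4+1)+1 with hh
  have hnh : n = h + 2 := by omega
  -- extract the leaves corresponding to the distinct residuals
  have hres : ∀ m : Fin (2^n - 1), ∃ s : List Bool, s.length = n ∧ R m = desc (T i) s := by
    intro m
    obtain ⟨s, hs1, hs2⟩ := res_leaf a hP1 n [] (R m) (by simp)
      (by rw [desc_nil]; exact (hRprop m).1)
    exact ⟨s, hs1, by simpa using hs2⟩
  choose leafOf hlen hval using hres
  have hleafinj : Function.Injective leafOf := by
    intro m m' heq
    apply hRinj
    rw [hval m, hval m', heq]
  set leafF : Finset (List Bool) :=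
    (Finset.univ : Finset (Fin n → Bool)).image (fun f => List.ofFn f) with hleafF
  have hmem_leafF : ∀ u : List Bool, u ∈ leafF ↔ u.length = n := by
    intro u
    constructor
    · intro hu
      obtain ⟨f, -, rfl⟩ := Finset.mem_image.1 hu
      simp
    · intro hu
      exact Finset.mem_image.2
        ⟨fun i => u.get (Fin.cast hu.symm i), Finset.mem_univ _, ofFn_get_cast u n hu⟩
  have hcard_leafF : leafF.card = 2^n := by
    rw [hleafF, Finset.card_image_of_injective _ List.ofFn_injective, Finset.card_univ]
    rw [Fintype.card_fun, Fintype.card_bool, Fintype.card_fin]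
  set chosen : Finset (List Bool) :=
    (Finset.univ : Finset (Fin (2^n - 1))).image leafOf with hchosen
  have hchosen_card : chosen.card = 2^n - 1 := by
    rw [hchosen, Finset.card_image_of_injective _ hleafinj, Finset.card_univ, Fintype.card_fin]
  have hchosen_sub : chosen ⊆ leafF := by
    intro u hu
    obtain ⟨m, -, rfl⟩ := Finset.mem_image.1 hu
    exact (hmem_leafF _).2 (hlen m)
  have hbad : (leafF \ chosen).card = 1 := by
    rw [Finset.card_sdiff_of_subset hchosen_sub, hcard_leafF, hchosen_card]
    have h1 : 1 ≤ 2^n := Nat.one_le_pow n 2 (by norm_num)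
    omega
  obtain ⟨b1, hb1⟩ := Finset.card_eq_one.1 hbad
  have hchosen_val : ∀ u ∈ chosen, ∃ m : Fin (2^n - 1), leafOf m = u := by
    intro u hu
    obtain ⟨m, -, hm⟩ := Finset.mem_image.1 hu
    exact ⟨m, hm⟩
  set b2 : List Bool :=
    if hD : ∃ u ∈ chosen, desc (T i) u = Dinf A then hD.choose else [] with hb2def
  have hb2 : ∀ u ∈ chosen, desc (T i) u = Dinf A → u = b2 := by
    intro u hu hD
    have hex : ∃ u ∈ chosen, desc (T i) u = Dinf A := ⟨u, hu, hD⟩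
    rw [hb2def, dif_pos hex]
    obtain ⟨hc1, hc2⟩ := hex.choose_spec
    obtain ⟨m, hm⟩ := hchosen_val u hu
    obtain ⟨m', hm'⟩ := hchosen_val _ hc1
    have hRR : R m = R m' := by
      rw [hval m, hval m', hm, hm', hD, hc2]
    rw [← hm, hRinj hRR, hm']
  obtain ⟨w₀, hw2, hwb1, hwb2⟩ := pick2 (b1.take 2) (b2.take 2)
  have hnw1 : ¬ (w₀ <+: b1) := fun hc => hwb1 (prefix_take_two hw2 hc)
  have hnw2 : ¬ (w₀ <+: b2) := fun hc => hwb2 (prefix_take_two hw2 hc)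
  have hgood : ∀ s : List Bool, s.length = h → (w₀ ++ s) ∈ chosen := by
    intro s hs
    by_contra hc
    have hmem : (w₀ ++ s) ∈ leafF := (hmem_leafF _).2 (by simp [hs, hw2]; omega)
    have hsd : (w₀ ++ s) ∈ leafF \ chosen := Finset.mem_sdiff.2 ⟨hmem, hc⟩
    rw [hb1] at hsd
    have := Finset.mem_singleton.1 hsd
    exact hnw1 (this ▸ List.prefix_append w₀ s)
  have hgoodD : ∀ s : List Bool, s.length = h → desc (T i) (w₀ ++ s) ≠ Dinf A := by
    intro s hs hD
    have := hb2 _ (hgood s hs) hD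
    exact hnw2 (this ▸ List.prefix_append w₀ s)
  have hdistinct : ∀ s s' : List Bool, s.length = h → s'.length = h →
      desc (T i) (w₀ ++ s) = desc (T i) (w₀ ++ s') → s = s' := by
    intro s s' hs hs' heq
    obtain ⟨m, hm⟩ := hchosen_val _ (hgood s hs)
    obtain ⟨m', hm'⟩ := hchosen_val _ (hgood s' hs')
    have hRR : R m = R m' := by rw [hval m, hval m', hm, hm']; exact heq
    have h2 : w₀ ++ s = w₀ ++ s' := by rw [← hm, hRinj hRR, hm']
    exact List.append_cancel_left h2
  set V : List Bool → BTAinf A := fun u => desc (T i) (w₀ ++ u) with hV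
  have hVpcc : ∀ u : List Bool, u.length < h →
      ∃ b, V u = pccInf b (V (u ++ [false])) (V (u ++ [true])) := by
    intro u hu
    refine ⟨a, ?_⟩
    rw [hV]
    dsimp only
    have hp := (Wpcc a hP1 (w₀ ++ u) (by simp [hw2]; omega)).1
    rw [hp, List.append_assoc, List.append_assoc]
  have hW1 : ∀ w : List Bool, w.length < n →
      (desc (T i) w).1 1 = BTA.pcc BTA.D a BTA.D :=
    fun w hw => (Wpcc a hP1 w hw).2
  have hproper : ∀ s, s.length = h →
      (desc (T i) (w₀ ++ s)).1 1 ≠ BTA.pcc BTA.D a BTA.D := by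
    intro s hs
    obtain ⟨m, hm⟩ := hchosen_val _ (hgood s hs)
    have hpr := (hRprop m).2
    rw [hval m, hm] at hpr
    exact hpr
  have hVD : ∀ u : List Bool, u.length ≤ h → V u ≠ Dinf A := by
    intro u hu
    rcases Nat.lt_or_ge u.length h with hlt | hge
    · obtain ⟨b, hbv⟩ := hVpcc u hlt
      rw [hbv]; exact pccInf_ne_Dinf _ _ _
    · exact hgoodD u (by omega)
  have hVinj : ∀ u v : List Bool, u.length ≤ h → v.length ≤ h → V u = V v → u = v := by
    have key : ∀ u v : List Bool, u.length < v.length → v.length ≤ h → V u ≠ V v := by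
      intro u v hlt hv heq
      set s := List.replicate (h - v.length) false with hs
      have hsl : s.length = h - v.length := by simp [hs]
      have hleaf : (v ++ s).length = h := by simp [hsl]; omega
      have hval1 : desc (T i) (w₀ ++ (v ++ s)) = desc (T i) (w₀ ++ (u ++ s)) := by
        rw [← List.append_assoc w₀ v s, ← List.append_assoc w₀ u s,
          desc_append (T i) (w₀ ++ v) s, desc_append (T i) (w₀ ++ u) s]
        rw [hV] at heq
        dsimp only at heq
        rw [heq]
      apply hproper (v ++ s) hleaf
      rw [hval1]
      apply hW1
      simp [hw2, hsl]
      omega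
    intro u v hu hv heq
    rcases Nat.lt_trichotomy u.length v.length with hlt | heqlen | hgt
    · exact absurd heq (key u v hlt hv)
    · set s := List.replicate (h - u.length) false with hs
      have hleaf1 : (u ++ s).length = h := by simp [hs]; omega
      have hleaf2 : (v ++ s).length = h := by simp [hs]; omega
      have hext : desc (T i) (w₀ ++ (u ++ s)) = desc (T i) (w₀ ++ (v ++ s)) := by
        rw [← List.append_assoc w₀ u s, ← List.append_assoc w₀ v s,
          desc_append (T i) (w₀ ++ u) s, desc_append (T i) (w₀ ++ v) s]
        rw [hV] at heq
        dsimp only at heq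
        rw [heq]
      have := hdistinct _ _ hleaf1 hleaf2 hext
      exact List.append_cancel_right this
    · exact absurd heq.symm (key v u hgt hu)
  obtain ⟨y1, y2, hw0⟩ := List.length_eq_two.1 hw2
  have hroot0 : T i = pccInf a (desc (T i) [false]) (desc (T i) [true]) := by
    have hp := (Wpcc a hP1 [] (by simp; omega)).1
    rw [desc_nil] at hp
    simpa using hp
  obtain ⟨h1f, h1t⟩ := stepPos hT hL hroot0
  have hstep1 : ∃ j1, T j1 = desc (T i) [y1] := by cases y1; exacts [h1f, h1t]
  obtain ⟨j1, hj1⟩ := hstep1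
  have hroot1 : T j1 = pccInf a (desc (T i) ([y1] ++ [false])) (desc (T i) ([y1] ++ [true])) := by
    rw [hj1]
    exact (Wpcc a hP1 [y1] (by simp; omega)).1
  obtain ⟨h2f, h2t⟩ := stepPos hT hL hroot1
  have hstep2 : ∃ j2, T j2 = desc (T i) ([y1] ++ [y2]) := by cases y2; exacts [h2f, h2t]
  obtain ⟨j2, hj2⟩ := hstep2
  have hrootV : T j2 = V [] := by
    rw [hV]
    dsimp only
    rw [hj2, hw0]
    simp
  exact main_no_tree (k := k) (K := K) (by omega) (by omega) hh hb hT hL V j2 hrootV hVpcc hVD hVinj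

theorem part1 (a : A) {k : ℕ} {X : List (Instr A)} (hb : JumpBounded k X) :
    ¬ HasANExpr a (2*((k+2)*4+1)+3) X :=
  part1_gen a hb _ rfl

end Part1
section Part2
open BTA

variable {A : Type}

/-- numeric value of an address. -/
def toNatAddr (u : List Bool) : ℕ := u.foldl (fun t x => 2*t + cond x 1 0) 0

lemma toNat_concat (u : List Bool) (x : Bool) :
    toNatAddr (u ++ [x]) = 2 * toNatAddr u + cond x 1 0 :=
  List.foldl_concat _ _ _ _

lemma toNat_inj : ∀ (u v : List Bool), u.length = v.length →
    toNatAddr u = toNatAddr v → u = v := by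
  intro u
  induction u using List.reverseRecOn with
  | nil =>
      intro v hlen _
      have : v.length = 0 := by simpa using hlen.symm
      rw [List.length_eq_zero_iff.1 this]
  | append_singleton u x ih =>
      intro v hlen heq
      cases v using List.reverseRecOn with
      | nil => simp at hlen
      | append_singleton v y =>
          rw [toNat_concat, toNat_concat] at heq
          have hxy : x = y := by
            cases x <;> cases y <;> simp at heq ⊢ <;> omega
          subst hxy
          have heq2 : toNatAddr u = toNatAddr v := by
            cases x <;> simp at heq <;> omega
          rw [ih v (by simp at hlen; omega) heq2]

/-- a chain of `j` postconditionals over `S`. -/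
def sChain (a : A) : ℕ → BTA A
  | 0 => BTA.S
  | j+1 => BTA.pcc (sChain a j) a (sChain a j)

lemma sChain_dep (a : A) : ∀ j, dep (sChain a j) = j := by
  intro j
  induction j with
  | zero => rfl
  | succ j ih => simp [sChain, dep, ih]

/-- the tree witness for part 2: a complete binary tree of depth `d` whose
leaves are `sChain`s of pairwise distinct suitable lengths. -/
def QTree (a : A) (g : ℕ) : ℕ → ℕ → BTA A
  | 0, t => sChain a ((t+1) * g)
  | d+1, t => BTA.pcc (QTree a g d (2*t)) a (QTree a g d (2*t+1))

lemma QTree_dep (a : A) (g : ℕ) : ∀ d t, dep (QTree a g d t) = d + (t+1) * 2^d * g := by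
  intro d
  induction d with
  | zero =>
      intro t
      simp [QTree, sChain_dep]
  | succ d ih =>
      intro t
      show dep (BTA.pcc (QTree a g d (2*t)) a (QTree a g d (2*t+1))) = _
      have hmax : max (dep (QTree a g d (2*t))) (dep (QTree a g d (2*t+1)))
          = d + (2*t+2) * 2^d * g := by
        rw [ih (2*t), ih (2*t+1)]
        have hnorm : 2*t+1+1 = 2*t+2 := rfl
        rw [hnorm]
        have hle : (2*t+1) * 2^d * g ≤ (2*t+2) * 2^d * g := by
          apply Nat.mul_le_mul_right
          apply Nat.mul_le_mul_right
          omega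
        omega
      show max (dep (QTree a g d (2*t))) (dep (QTree a g d (2*t+1))) + 1 = _
      rw [hmax, pow_succ]
      ring

lemma embed_D : embed (BTA.D) = Dinf A :=
  Subtype.ext (funext fun n => by cases n <;> rfl)

lemma mod_key {g d1 d2 M1 M2 : ℕ} (h1 : d1 < g) (h2 : d2 < g)
    (heq : d1 + M1 * g = d2 + M2 * g) : d1 = d2 ∧ M1 = M2 := by
  have e1 : (d1 + M1 * g) % g = d1 := by
    rw [Nat.add_mul_mod_self_right, Nat.mod_eq_of_lt h1]
  have e2 : (d2 + M2 * g) % g = d2 := by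
    rw [Nat.add_mul_mod_self_right, Nat.mod_eq_of_lt h2]
  have hd : d1 = d2 := by rw [← e1, ← e2, heq]
  refine ⟨hd, ?_⟩
  subst hd
  have hM : M1 * g = M2 * g := by omega
  exact Nat.eq_of_mul_eq_mul_right (by omega) hM

theorem part2_gen (a : A) {k K h : ℕ} (hkK : k ≤ K) (h2K : 2 ≤ K)
    (hh : h = 2*(K*4+1)+1) {X : List (Instr A)} (hb : JumpBounded k X)
    {T : ℤ → BTAinf A} (hT : ExtrEqns X T) (hL : LoopRule X T) (i : ℤ)
    (heq : T i = embed (QTree a (h+1) h 0)) : False := by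
  classical
  set g := h + 1 with hg
  set V : List Bool → BTAinf A :=
    fun u => embed (QTree a g (h - u.length) (toNatAddr u)) with hV
  have hVconcat : ∀ (u : List Bool) (x : Bool),
      V (u ++ [x]) = embed (QTree a g (h - (u.length+1)) (2 * toNatAddr u + cond x 1 0)) := by
    intro u x
    rw [hV]
    dsimp only
    rw [toNat_concat]
    congr 2
    simp
  apply main_no_tree hkK h2K hh hb hT hL V i ?_ ?_ ?_ ?_
  · -- root
    rw [hV]
    dsimp only
    have h0 : toNatAddr [] = 0 := rfl
    rw [h0]
    simpa using heq
  · -- pcc structure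
    intro u hu
    refine ⟨a, ?_⟩
    rw [hVconcat u false, hVconcat u true]
    have hd : h - u.length = (h - (u.length+1)) + 1 := by omega
    rw [hV]
    dsimp only
    rw [hd]
    rw [show QTree a g ((h - (u.length+1)) + 1) (toNatAddr u)
        = BTA.pcc (QTree a g (h - (u.length+1)) (2 * toNatAddr u)) a
          (QTree a g (h - (u.length+1)) (2 * toNatAddr u + 1)) from rfl]
    rw [embed_pcc]
    rfl
  · -- no Dinf values
    intro u hu hD
    rw [hV] at hD
    dsimp only at hD
    rw [← embed_D] at hD
    have := embed_inj hD
    have hdep := congrArg dep this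
    rw [QTree_dep] at hdep
    have hpos : 1 ≤ (toNatAddr u + 1) * 2 ^ (h - u.length) * g := by
      have h1 : 1 ≤ toNatAddr u + 1 := by omega
      have h2 : 1 ≤ 2 ^ (h - u.length) := Nat.one_le_pow _ _ (by norm_num)
      have h3 : 1 ≤ g := by omega
      calc 1 = 1 * 1 * 1 := by norm_num
      _ ≤ (toNatAddr u + 1) * 2 ^ (h - u.length) * g :=
          Nat.mul_le_mul (Nat.mul_le_mul h1 h2) h3
    have hdD : dep (BTA.D : BTA A) = 0 := rfl
    rw [hdD] at hdep
    omega
  · -- injectivity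
    intro u v hu hv heq'
    rw [hV] at heq'
    dsimp only at heq'
    have hQ := embed_inj heq'
    have hdep := congrArg dep hQ
    rw [QTree_dep, QTree_dep] at hdep
    have hd1 : h - u.length < g := by omega
    have hd2 : h - v.length < g := by omega
    obtain ⟨hd, hM⟩ := mod_key hd1 hd2 hdep
    have hlen : u.length = v.length := by omega
    have hpow : (2:ℕ) ^ (h - u.length) = 2 ^ (h - v.length) := by rw [hd]
    have ht : toNatAddr u = toNatAddr v := by
      rw [← hd] at hM
      have := Nat.eq_of_mul_eq_mul_right
        (show 0 < 2 ^ (h - u.length) from Nat.pow_pos (by norm_num)) hM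
      omega
    exact toNat_inj u v hlen ht

end Part2

theorem ck_not_universal' {A : Type} (a : A) (k : ℕ) :
    ∃ n : ℕ, 0 < n ∧
      (∀ X : List (Instr A), X ≠ [] → JumpBounded k X → ¬ HasANExpr a n X) ∧
      ∃ Q : BTA A, ∀ X : List (Instr A), X ≠ [] → JumpBounded k X →
        ∀ (T : ℤ → BTAinf A) (i : ℤ),
          ExtrEqns X T → LoopRule X T → T i ≠ embed Q := by
  refine ⟨2*((k+2)*4+1)+3, by omega, ?_, ?_⟩
  · intro X _ hb
    exact part1 a hb
  · refine ⟨QTree a ((2*((k+2)*4+1)+1)+1) (2*((k+2)*4+1)+1) 0, ?_⟩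
    intro X _ hb T i hT hL heq
    exact part2_gen a (k := k) (K := k+2) (by omega) (by omega) rfl hb hT hL i heq
/-- For every bound `k` there is `n ∈ ℕ⁺` such that no expression of `C_k`
has the `a-n`-property; consequently, some finite BTA thread is not the
thread extraction, from any position, of any expression in `C_k`. -/
theorem ck_not_universal {A : Type} (a : A) (k : ℕ) :
    ∃ n : ℕ, 0 < n ∧
      (∀ X : List (Instr A), X ≠ [] → JumpBounded k X → ¬ HasANExpr a n X) ∧
      ∃ Q : BTA A, ∀ X : List (Instr A), X ≠ [] → JumpBounded k X →
        ∀ (T : ℤ → BTAinf A) (i : ℤ),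
          ExtrEqns X T → LoopRule X T → T i ≠ embed Q :=
  ck_not_universal' a k
end

section
/- For each n ≥ 1 and each function F : {1,…,n−1} → {0,1,…,n−1}, define threads P^F_0 = S and P^F_{i+1} = P^F_{F(i+1)} ⊴ a ⊵ P^F_i. Then for distinct functions F ≠ G, the threads P^F_{n−1} and P^G_{n−1} are distinct; hence there are at least n^{n−1} pairwise distinct regular threads with at most n states over the single action a. -/
/-- `P` is the family of threads `P^F_0, …, P^F_n` over the single action `a`
determined by `F : {1,…,n} → {0,…,n}`:
`P^F_0 = S` and `P^F_{i+1} = P^F_{F(i+1)} ⊴ a ⊵ P^F_i`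
(here `F i` stands for `F(i+1)`, `i.succ` for `i+1` and `i.castSucc` for `i`). -/
def FamFor {A : Type} (a : A) {n : ℕ} (F : Fin n → Fin (n+1))
    (P : Fin (n+1) → BTAinf A) : Prop :=
  P 0 = Sinf A ∧
  ∀ i : Fin n, P i.succ = pccInf a (P (F i)) (P i.castSucc)

theorem comp0_aux {A : Type} (x : BTAinf A) : x.1 0 = BTA.D := by
  have := x.2 0
  rw [← this]
  rfl

theorem famZero_aux {A : Type} {a : A} {n : ℕ} {F : Fin n → Fin (n+1)}
    {P : Fin (n+1) → BTAinf A} (h : FamFor a F P) (m : ℕ) :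
    (P 0).1 (m+1) = BTA.S := by
  rw [h.1]; rfl

theorem famSucc_aux {A : Type} {a : A} {n : ℕ} {F : Fin n → Fin (n+1)}
    {P : Fin (n+1) → BTAinf A} (h : FamFor a F P) (i : Fin n) (m : ℕ) :
    (P i.succ).1 (m+1) = BTA.pcc ((P (F i)).1 m) a ((P i.castSucc).1 m) := by
  rw [h.2 i]; rfl

theorem distinguish_aux {A : Type} (a : A) {n : ℕ} {F G : Fin n → Fin (n+1)}
    {P Q : Fin (n+1) → BTAinf A} (hP : FamFor a F P) (hQ : FamFor a G Q) :
    ∀ m (i j : Fin (n+1)), i.val < m → j.val < m →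
      (P i).1 m = (Q j).1 m → i = j := by
  intro m
  induction m with
  | zero => intro i j hi hj _; omega
  | succ m ih =>
    intro i j hi hj hEq
    rcases Fin.eq_zero_or_eq_succ i with rfl | ⟨k, rfl⟩
    · rcases Fin.eq_zero_or_eq_succ j with rfl | ⟨l, rfl⟩
      · rfl
      · rw [famZero_aux hP, famSucc_aux hQ] at hEq; cases hEq
    · rcases Fin.eq_zero_or_eq_succ j with rfl | ⟨l, rfl⟩
      · rw [famZero_aux hQ, famSucc_aux hP] at hEq; cases hEq
      · rw [famSucc_aux hP, famSucc_aux hQ] at hEq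
        injection hEq with h1 h2 h3
        have hk : (k.castSucc : Fin (n+1)).val < m := by
          simp only [Fin.coe_castSucc]
          have := Fin.val_succ k ▸ hi
          omega
        have hl : (l.castSucc : Fin (n+1)).val < m := by
          simp only [Fin.coe_castSucc]
          have := Fin.val_succ l ▸ hj
          omega
        have := ih k.castSucc l.castSucc hk hl h3
        rw [Fin.castSucc_inj] at this
        rw [this]

theorem famFor_main_aux {A : Type} (a : A) {n : ℕ}
    (F G : Fin n → Fin (n+1)) (P Q : Fin (n+1) → BTAinf A)
    (hP : FamFor a F P) (hQ : FamFor a G Q)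
    (hEq : P (Fin.last n) = Q (Fin.last n)) : F = G := by
  have spine : ∀ k (hk : k ≤ n) m,
      (P ⟨n - k, by omega⟩).1 m = (Q ⟨n - k, by omega⟩).1 m := by
    intro k
    induction k with
    | zero =>
      intro _ m
      have h1 : (⟨n - 0, by omega⟩ : Fin (n+1)) = Fin.last n := by
        apply Fin.ext; simp [Fin.last]
      rw [h1, hEq]
    | succ k ih =>
      intro hk m
      have hk' : k ≤ n := by omega
      have hjn : n - (k+1) < n := by omega
      set j : Fin n := ⟨n - (k+1), hjn⟩ with hj
      have hjs : (j.succ : Fin (n+1)) = ⟨n - k, by omega⟩ := by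
        apply Fin.ext; simp [hj, Fin.val_succ]; omega
      have hjc : (j.castSucc : Fin (n+1)) = ⟨n - (k+1), by omega⟩ := by
        apply Fin.ext; simp [hj]
      have h := ih hk' (m+1)
      rw [← hjs, famSucc_aux hP, famSucc_aux hQ] at h
      rw [← hjc]
      injection h
  have allEq : ∀ (i : Fin (n+1)) m, (P i).1 m = (Q i).1 m := by
    intro i m
    have hle : n - i.val ≤ n := by omega
    have h := spine (n - i.val) hle m
    have hi : (⟨n - (n - i.val), by omega⟩ : Fin (n+1)) = i := by
      apply Fin.ext; simp; omega
    rwa [hi] at h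
  funext i
  have key : ∀ m, (P (F i)).1 m = (Q (G i)).1 m := by
    intro m
    have h := allEq i.succ (m+1)
    rw [famSucc_aux hP, famSucc_aux hQ] at h
    injection h
  exact distinguish_aux a hP hQ (n+1) (F i) (G i) (F i).isLt (G i).isLt (key (n+1))

/-- For distinct `F ≠ G` the threads `P^F_{n}` and `P^G_{n}` are distinct;
hence any choice of solutions yields `(n+1)^n` pairwise distinct regular
threads with at most `n+1` states over the single action `a`. -/
theorem famFor_injective {A : Type} (a : A) (n : ℕ) :
    (∀ (F G : Fin n → Fin (n+1)) (P Q : Fin (n+1) → BTAinf A),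
      FamFor a F P → FamFor a G Q → F ≠ G →
        P (Fin.last n) ≠ Q (Fin.last n)) ∧
    (∀ sol : (Fin n → Fin (n+1)) → Fin (n+1) → BTAinf A,
      (∀ F, FamFor a F (sol F)) →
        Function.Injective (fun F => sol F (Fin.last n))) := by
  constructor
  · intro F G P Q hP hQ hFG hEq
    exact hFG (famFor_main_aux a F G P Q hP hQ hEq)
  · intro sol hsol F G h
    exact famFor_main_aux a F G (sol F) (sol G) (hsol F) (hsol G) h
end
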